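/- arXiv:1407.0777 — 6 statements merged into one kernel-verified Lean document; each statement's English description precedes it below -/
import Mathlib

section
/- Let Q be a basic sequence that is infinite in limit and let r be a rational number that is not an integer. Then there exists a real number x such that x is Q-distribution normal but rx is not Q-distribution normal. -/
open Filter Finset MeasureTheory

noncomputable section
open scoped Classical

/-- `cantorProd q n = q 1 * q 2 * ... * q n` (empty product for `n = 0`). -/
def cantorProd (q : ℕ → ℕ) (n : ℕ) : ℕ := ∏ j ∈ Finset.Icc 1 n, q j

/-- `T_{Q,n}(x) = q_1 q_2 ⋯ q_n · x (mod 1)`. -/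
def TQ (q : ℕ → ℕ) (n : ℕ) (x : ℝ) : ℝ := Int.fract ((cantorProd q n : ℝ) * x)

/-- A basic sequence: `q n ≥ 2` for all `n ≥ 1`. -/
def BasicSeq (q : ℕ → ℕ) : Prop := ∀ n, 1 ≤ n → 2 ≤ q n

/-- `Q` is infinite in limit: `q n → ∞`. -/
def InfiniteInLimit (q : ℕ → ℕ) : Prop := Filter.Tendsto q Filter.atTop Filter.atTop

/-- `E` (indexed from 1) is the sequence of digits of the `Q`-Cantor series expansion of `x`:
`E n ∈ {0, …, q n − 1}`, `E n ≠ q n − 1` infinitely often, and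
`x = ⌊x⌋ + ∑_{n ≥ 1} E n / (q 1 ⋯ q n)`. -/
def IsCantorDigits (q : ℕ → ℕ) (E : ℕ → ℕ) (x : ℝ) : Prop :=
  (∀ n, 1 ≤ n → E n < q n) ∧
  {n | 1 ≤ n ∧ E n ≠ q n - 1}.Infinite ∧
  x = (⌊x⌋ : ℝ) + ∑' n : ℕ, (E (n + 1) : ℝ) / (cantorProd q (n + 1) : ℝ)

/-- `Q_n^{(k)} = ∑_{j=1}^n 1/(q_j q_{j+1} ⋯ q_{j+k-1})`. -/
def Qnk (q : ℕ → ℕ) (k n : ℕ) : ℝ :=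
  ∑ j ∈ Finset.Icc 1 n, 1 / ∏ i ∈ Finset.Ico j (j + k), (q i : ℝ)

/-- `Q` is `k`-divergent. -/
def KDivergent (q : ℕ → ℕ) (k : ℕ) : Prop :=
  Filter.Tendsto (fun n => Qnk q k n) Filter.atTop Filter.atTop

/-- `N_n^Q(B, x)`: the number of indices `1 ≤ i ≤ n - |B| + 1` at which the block `B`
occurs in the digit sequence `E`. -/
def blockCount (E : ℕ → ℕ) (B : List ℕ) (n : ℕ) : ℕ :=
  ((Finset.Icc 1 (n + 1 - B.length)).filter
    (fun i => ∀ t, t < B.length → E (i + t) = B.getD t 0)).card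

/-- The digit sequence `E` is `Q`-normal of order `k`. -/
def QNormalOfOrder (q : ℕ → ℕ) (E : ℕ → ℕ) (k : ℕ) : Prop :=
  ∀ B : List ℕ, B.length = k →
    Filter.Tendsto (fun n => (blockCount E B n : ℝ) / Qnk q k n) Filter.atTop (nhds 1)

/-- A sequence (indexed from 0) is uniformly distributed mod 1. -/
def UDMod1 (z : ℕ → ℝ) : Prop :=
  ∀ a b : ℝ, 0 ≤ a → a < b → b ≤ 1 →
    Filter.Tendsto
      (fun N => (((Finset.range N).filter (fun n => Int.fract (z n) ∈ Set.Ico a b)).card : ℝ) / N)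
      Filter.atTop (nhds (b - a))

/-- `x` is `Q`-distribution normal: `(T_{Q,n}(x))_{n ≥ 0}` is uniformly distributed mod 1. -/
def QDistNormal (q : ℕ → ℕ) (x : ℝ) : Prop := UDMod1 (fun n => TQ q n x)

/-- A set of natural numbers has (natural) density zero. -/
def DensityZero (A : Set ℕ) : Prop :=
  Filter.Tendsto (fun N => (((Finset.Icc 1 N).filter (fun n => n ∈ A)).card : ℝ) / N)
    Filter.atTop (nhds 0)

/-- The `n`-th digit (for `n ≥ 1`) of the `Q`-Cantor series expansion of `x`,
extracted via `E_n = ⌊q_n · T_{Q,n-1}(x)⌋`. -/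
def cantorDigit (q : ℕ → ℕ) (x : ℝ) (n : ℕ) : ℤ := ⌊(q n : ℝ) * TQ q (n - 1) x⌋

/-- `ψ_{P,Q}(x) = ∑_{n ≥ 1} min(E_n, q_n − 1)/(q_1 ⋯ q_n)`, where `E` are the `P`-digits of `x`. -/
def psiMap (p q : ℕ → ℕ) (x : ℝ) : ℝ :=
  ∑' n : ℕ, ((min (cantorDigit p x (n + 1)) ((q (n + 1) : ℤ) - 1) : ℤ) : ℝ) /
    (cantorProd q (n + 1) : ℝ)

/-- `N_n^Q(B, x)` defined via the canonical digits of the real number `x`. -/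
def blockCountReal (q : ℕ → ℕ) (x : ℝ) (B : List ℕ) (n : ℕ) : ℕ :=
  ((Finset.Icc 1 (n + 1 - B.length)).filter
    (fun i => ∀ t, t < B.length → cantorDigit q x (i + t) = (B.getD t 0 : ℤ))).card

/-- The real number `x` is `Q`-normal of order `k`. -/
def QNormalOfOrderReal (q : ℕ → ℕ) (x : ℝ) (k : ℕ) : Prop :=
  ∀ B : List ℕ, B.length = k →
    Filter.Tendsto (fun n => (blockCountReal q x B n : ℝ) / Qnk q k n) Filter.atTop (nhds 1)

/-- The discrepancy `D_N` of the finite sequence `x 1, …, x N` (of numbers in `[0,1)`). -/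
def discrepancy (N : ℕ) (x : ℕ → ℝ) : ℝ :=
  sSup {d : ℝ | ∃ a b : ℝ, 0 ≤ a ∧ a ≤ b ∧ b ≤ 1 ∧
    d = |(((Finset.Icc 1 N).filter (fun n => x n ∈ Set.Ico a b)).card : ℝ) / N - (b - a)|}

namespace Stmt7Aux

def tri (m : ℕ) : ℕ := ∑ i ∈ Finset.range m, (i + 1)

lemma tri_succ (m : ℕ) : tri (m + 1) = tri m + (m + 1) := Finset.sum_range_succ _ _

lemma tri_mono : StrictMono tri :=
  strictMono_nat_of_lt_succ (fun n => by rw [tri_succ]; omega)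

lemma le_tri (m : ℕ) : m ≤ tri m := by
  induction m with
  | zero => simp [tri]
  | succ k ih => rw [tri_succ]; omega

lemma self_lt_tri_succ (n : ℕ) : n < tri (n + 1) := by
  induction n with
  | zero => simp [tri]
  | succ k ih => rw [tri_succ]; omega

lemma two_tri (m : ℕ) : 2 * tri m = m * (m + 1) := by
  induction m with
  | zero => simp [tri]
  | succ k ih => rw [tri_succ]; ring_nf; ring_nf at ih; omega

def blk (n : ℕ) : ℕ := Nat.find (⟨n, self_lt_tri_succ n⟩ : ∃ m, n < tri (m + 1))

lemma blk_spec (n : ℕ) : tri (blk n) ≤ n ∧ n < tri (blk n + 1) := by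
  constructor
  · rcases Nat.eq_zero_or_pos (blk n) with h | h
    · simp [h, tri]
    · have h2 := Nat.find_min (⟨n, self_lt_tri_succ n⟩ : ∃ m, n < tri (m + 1))
        (show blk n - 1 < blk n by omega)
      have h3 : blk n - 1 + 1 = blk n := by omega
      rw [h3] at h2
      omega
  · exact Nat.find_spec (⟨n, self_lt_tri_succ n⟩ : ∃ m, n < tri (m + 1))

lemma blk_eq {m n : ℕ} (h1 : tri m ≤ n) (h2 : n < tri (m + 1)) : blk n = m := by
  have hle : blk n ≤ m := by
    have : blk n = Nat.find (⟨n, self_lt_tri_succ n⟩ : ∃ m, n < tri (m + 1)) := rfl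
    rw [this]
    exact Nat.find_min' _ h2
  rcases lt_or_eq_of_le hle with h | h
  · exfalso
    have : tri (blk n + 1) ≤ tri m := tri_mono.monotone (by omega)
    have := (blk_spec n).2
    omega
  · exact h

lemma blk_tri (m : ℕ) : blk (tri m) = m :=
  blk_eq le_rfl (tri_mono (Nat.lt_succ_self m))

lemma le_blk {m n : ℕ} (h : tri m ≤ n) : m ≤ blk n := by
  have h2 := (blk_spec n).2
  by_contra hc
  push_neg at hc
  have : tri (blk n + 1) ≤ tri m := tri_mono.monotone (by omega)
  omega

def aseq (n : ℕ) : ℝ := ((n - tri (blk n) : ℕ) : ℝ) / ((blk n : ℝ) + 1)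

lemma aseq_mem (n : ℕ) : aseq n ∈ Set.Ico (0 : ℝ) 1 := by
  have h := blk_spec n
  have hlt : (n - tri (blk n) : ℕ) < blk n + 1 := by
    have := tri_succ (blk n); omega
  have hpos : (0 : ℝ) < (blk n : ℝ) + 1 := by positivity
  constructor
  · rw [aseq]; positivity
  · rw [aseq, div_lt_one hpos]
    exact_mod_cast hlt

lemma aseq_tri (m : ℕ) : aseq (tri m) = 0 := by
  simp [aseq, blk_tri]

lemma fract_aseq (n : ℕ) : Int.fract (aseq n) = aseq n :=
  Int.fract_eq_self.mpr ⟨(aseq_mem n).1, (aseq_mem n).2⟩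


section Count

variable {a b : ℝ}

/-- count of aseq hits in [a,b) among indices < N -/
def cnt (a b : ℝ) (N : ℕ) : ℕ :=
  ((Finset.range N).filter (fun n => aseq n ∈ Set.Ico a b)).card

lemma block_filter (m : ℕ) (ha : 0 ≤ a) (hb : b ≤ 1) :
    (Finset.Ico (tri m) (tri (m + 1))).filter (fun n => aseq n ∈ Set.Ico a b)
      = Finset.Ico (tri m + ⌈((m : ℝ) + 1) * a⌉₊) (tri m + ⌈((m : ℝ) + 1) * b⌉₊) := by
  have hm1 : (0 : ℝ) < (m : ℝ) + 1 := by positivity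
  have hceilb : ⌈((m : ℝ) + 1) * b⌉₊ ≤ m + 1 := by
    apply Nat.ceil_le.mpr
    push_cast
    nlinarith
  ext n
  simp only [Finset.mem_filter, Finset.mem_Ico, Set.mem_Ico]
  have key : ∀ (h1 : tri m ≤ n) (h2 : n < tri (m + 1)),
      (a ≤ aseq n ∧ aseq n < b) ↔
      (tri m + ⌈((m : ℝ) + 1) * a⌉₊ ≤ n ∧ n < tri m + ⌈((m : ℝ) + 1) * b⌉₊) := by
    intro h1 h2
    have hblk : blk n = m := blk_eq h1 h2
    have haseq : aseq n = ((n - tri m : ℕ) : ℝ) / ((m : ℝ) + 1) := by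
      rw [aseq, hblk]
    rw [haseq]
    rw [le_div_iff₀ hm1, div_lt_iff₀ hm1]
    constructor
    · rintro ⟨hl, hr⟩
      constructor
      · have : ⌈((m : ℝ) + 1) * a⌉₊ ≤ n - tri m := Nat.ceil_le.mpr (by linarith)
        omega
      · have : n - tri m < ⌈((m : ℝ) + 1) * b⌉₊ := Nat.lt_ceil.mpr (by linarith)
        omega
    · rintro ⟨hl, hr⟩
      constructor
      · have h5 : ⌈((m : ℝ) + 1) * a⌉₊ ≤ n - tri m := by omega
        have := Nat.ceil_le.mp h5
        linarith
      · have h5 : n - tri m < ⌈((m : ℝ) + 1) * b⌉₊ := by omega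
        have := Nat.lt_ceil.mp h5
        linarith
  constructor
  · rintro ⟨⟨h1, h2⟩, h3⟩
    exact ((key h1 h2).mp h3)
  · intro hmem
    have h1 : tri m ≤ n := by omega
    have h2 : n < tri (m + 1) := by
      have := tri_succ m
      omega
    exact ⟨⟨h1, h2⟩, (key h1 h2).mpr hmem⟩

lemma cnt_tri_succ (M : ℕ) (ha : 0 ≤ a) (hab : a ≤ b) (hb : b ≤ 1) :
    cnt a b (tri (M + 1))
      = cnt a b (tri M) + (⌈((M : ℝ) + 1) * b⌉₊ - ⌈((M : ℝ) + 1) * a⌉₊) := by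
  have hsplit : Finset.range (tri (M + 1))
      = Finset.range (tri M) ∪ Finset.Ico (tri M) (tri (M + 1)) := by
    rw [Finset.range_eq_Ico, Finset.range_eq_Ico]
    exact (Finset.Ico_union_Ico_eq_Ico (Nat.zero_le _) (tri_mono.monotone (Nat.le_succ M))).symm
  have hdisj : Disjoint (Finset.range (tri M)) (Finset.Ico (tri M) (tri (M + 1))) := by
    simp only [Finset.disjoint_left, Finset.mem_range, Finset.mem_Ico]
    omega
  rw [cnt, hsplit, Finset.filter_union,
    Finset.card_union_of_disjoint (Finset.disjoint_filter_filter hdisj)]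
  rw [block_filter M ha hb]
  have hle : ⌈((M : ℝ) + 1) * a⌉₊ ≤ ⌈((M : ℝ) + 1) * b⌉₊ := by
    apply Nat.ceil_le_ceil
    have hm1 : (0 : ℝ) ≤ (M : ℝ) + 1 := by positivity
    nlinarith
  rw [Nat.card_Ico]
  simp only [cnt]
  omega

lemma cnt_tri_bound (ha : 0 ≤ a) (hab : a ≤ b) (hb : b ≤ 1) :
    ∀ M : ℕ, |(cnt a b (tri M) : ℝ) - (tri M : ℝ) * (b - a)| ≤ M := by
  intro M
  induction M with
  | zero => simp [cnt, tri]
  | succ M ih =>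
    rw [cnt_tri_succ M ha hab hb]
    have hm1 : (0 : ℝ) < (M : ℝ) + 1 := by positivity
    set k := ⌈((M : ℝ) + 1) * a⌉₊ with hk
    set K := ⌈((M : ℝ) + 1) * b⌉₊ with hK
    have hkK : k ≤ K := Nat.ceil_le_ceil (by nlinarith)
    have h1 : ((M : ℝ) + 1) * a ≤ k := Nat.le_ceil _
    have h2 : (k : ℝ) < ((M : ℝ) + 1) * a + 1 := Nat.ceil_lt_add_one (by positivity)
    have h3 : ((M : ℝ) + 1) * b ≤ K := Nat.le_ceil _
    have h4 : (K : ℝ) < ((M : ℝ) + 1) * b + 1 := Nat.ceil_lt_add_one (by nlinarith)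
    have hcast : ((K - k : ℕ) : ℝ) = (K : ℝ) - (k : ℝ) := by
      push_cast [hkK]
      ring
    have hblock : |((K - k : ℕ) : ℝ) - ((M : ℝ) + 1) * (b - a)| ≤ 1 := by
      rw [hcast, abs_le]
      constructor <;> nlinarith
    have htri : ((tri (M + 1) : ℕ) : ℝ) = (tri M : ℝ) + ((M : ℝ) + 1) := by
      rw [tri_succ]
      push_cast
      ring
    push_cast
    rw [htri]
    have expand : (cnt a b (tri M) : ℝ) + ((K - k : ℕ) : ℝ)
        - ((tri M : ℝ) + ((M : ℝ) + 1)) * (b - a)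
        = ((cnt a b (tri M) : ℝ) - (tri M : ℝ) * (b - a))
          + (((K - k : ℕ) : ℝ) - ((M : ℝ) + 1) * (b - a)) := by ring
    calc |(cnt a b (tri M) : ℝ) + ((K - k : ℕ) : ℝ)
        - ((tri M : ℝ) + ((M : ℝ) + 1)) * (b - a)|
        = |((cnt a b (tri M) : ℝ) - (tri M : ℝ) * (b - a))
          + (((K - k : ℕ) : ℝ) - ((M : ℝ) + 1) * (b - a))| := by rw [expand]
      _ ≤ |(cnt a b (tri M) : ℝ) - (tri M : ℝ) * (b - a)|
          + |((K - k : ℕ) : ℝ) - ((M : ℝ) + 1) * (b - a)| := abs_add_le _ _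
      _ ≤ M + 1 := by
          have := hblock
          linarith [ih]

lemma cnt_mono_diff (N N' : ℕ) (h : N ≤ N') :
    cnt a b N ≤ cnt a b N' ∧ cnt a b N' ≤ cnt a b N + (N' - N) := by
  constructor
  · apply Finset.card_le_card
    apply Finset.filter_subset_filter
    exact Finset.range_subset_range.mpr h
  · have hsplit : Finset.range N' = Finset.range N ∪ Finset.Ico N N' := by
      rw [Finset.range_eq_Ico, Finset.range_eq_Ico]
      exact (Finset.Ico_union_Ico_eq_Ico (Nat.zero_le _) h).symm
    have hdisj : Disjoint (Finset.range N) (Finset.Ico N N') := by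
      simp only [Finset.disjoint_left, Finset.mem_range, Finset.mem_Ico]
      omega
    rw [cnt, hsplit, Finset.filter_union,
      Finset.card_union_of_disjoint (Finset.disjoint_filter_filter hdisj)]
    have : ((Finset.Ico N N').filter (fun n => aseq n ∈ Set.Ico a b)).card ≤ N' - N := by
      calc ((Finset.Ico N N').filter (fun n => aseq n ∈ Set.Ico a b)).card
          ≤ (Finset.Ico N N').card := Finset.card_filter_le _ _
        _ = N' - N := Nat.card_Ico _ _
    simp only [cnt]
    omega

lemma cnt_global_bound (ha : 0 ≤ a) (hab : a ≤ b) (hb : b ≤ 1) (N : ℕ) :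
    |(cnt a b N : ℝ) - (N : ℝ) * (b - a)| ≤ 3 * (blk N : ℝ) + 3 := by
  have hspec := blk_spec N
  have htri := tri_succ (blk N)
  set M := blk N with hM
  have hdiff : N - tri M ≤ M + 1 := by omega
  have h1 := cnt_tri_bound ha hab hb M
  have h2 := cnt_mono_diff (a := a) (b := b) (tri M) N hspec.1
  have hcnt1 : (cnt a b (tri M) : ℝ) ≤ cnt a b N := by exact_mod_cast h2.1
  have hcnt2 : (cnt a b N : ℝ) ≤ cnt a b (tri M) + ((M : ℝ) + 1) := by
    have := h2.2
    have hc : (cnt a b N : ℝ) ≤ (cnt a b (tri M) : ℝ) + ((N - tri M : ℕ) : ℝ) := by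
      exact_mod_cast this
    have : ((N - tri M : ℕ) : ℝ) ≤ (M : ℝ) + 1 := by exact_mod_cast hdiff
    linarith
  have hN : (N : ℝ) - tri M ≤ (M : ℝ) + 1 := by
    have h5 : (N : ℕ) ≤ tri M + (M + 1) := by omega
    have : (N : ℝ) ≤ (tri M : ℝ) + ((M : ℝ) + 1) := by exact_mod_cast h5
    linarith
  have hNge : (tri M : ℝ) ≤ N := by exact_mod_cast hspec.1
  have hL1 : 0 ≤ b - a := by linarith
  have hL2 : b - a ≤ 1 := by linarith
  rw [abs_le]
  rw [abs_le] at h1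
  constructor <;> nlinarith

lemma blk_tendsto : Tendsto blk atTop atTop := by
  apply tendsto_atTop_atTop.mpr
  intro M
  exact ⟨tri M, fun n hn => le_blk hn⟩

lemma aseq_ud_raw (ha : 0 ≤ a) (hab : a < b) (hb : b ≤ 1) :
    Tendsto (fun N => ((cnt a b N : ℝ)) / N) atTop (nhds (b - a)) := by
  rw [Metric.tendsto_atTop]
  intro ε hε
  obtain ⟨M₀, hM₀⟩ : ∃ M₀ : ℕ, 1 ≤ M₀ ∧ 12 / (M₀ : ℝ) < ε := by
    obtain ⟨M₀, hM⟩ := exists_nat_gt (max 1 (12 / ε))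
    refine ⟨M₀, ?_, ?_⟩
    · have := le_max_left 1 (12 / ε)
      have : (1 : ℝ) < M₀ := lt_of_le_of_lt this hM
      exact_mod_cast this.le
    · have h12 : 12 / ε < M₀ := lt_of_le_of_lt (le_max_right _ _) hM
      have hM0pos : (0 : ℝ) < M₀ := lt_trans (by linarith [le_max_left 1 (12/ε)]) hM
      rw [div_lt_iff₀ hM0pos]
      have hdm : (12 / ε) * ε = 12 := div_mul_cancel₀ _ (ne_of_gt hε)
      nlinarith
  refine ⟨tri M₀, fun N hN => ?_⟩
  set M := blk N with hMdef
  have hMge : M₀ ≤ M := le_blk hN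
  have hM1 : 1 ≤ M := le_trans hM₀.1 hMge
  have hNge : tri M ≤ N := (blk_spec N).1
  have hNpos : 0 < N := by
    have h6 := le_tri M₀
    have h7 := hM₀.1
    omega
  have hNposR : (0 : ℝ) < N := by exact_mod_cast hNpos
  have hbound := cnt_global_bound ha hab.le hb N
  rw [Real.dist_eq]
  have heq : (cnt a b N : ℝ) / N - (b - a) = ((cnt a b N : ℝ) - N * (b - a)) / N := by
    field_simp
  rw [heq, abs_div, abs_of_pos hNposR, div_lt_iff₀ hNposR]
  -- N ≥ tri M ≥ M*(M+1)/2
  have htriM : (tri M : ℝ) = (M : ℝ) * ((M : ℝ) + 1) / 2 := by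
    have := two_tri M
    have : ((2 * tri M : ℕ) : ℝ) = ((M * (M + 1) : ℕ) : ℝ) := by rw [this]
    push_cast at this
    linarith
  have hNbig : (M : ℝ) * ((M : ℝ) + 1) / 2 ≤ N := by
    rw [← htriM]
    exact_mod_cast hNge
  have hMR : (1 : ℝ) ≤ M := by exact_mod_cast hM1
  have hM₀R : (M₀ : ℝ) ≤ M := by exact_mod_cast hMge
  have hM₀pos : (0 : ℝ) < M₀ := by
    have := hM₀.1
    exact_mod_cast Nat.lt_of_lt_of_le Nat.zero_lt_one this
  calc |(cnt a b N : ℝ) - N * (b - a)| ≤ 3 * (M : ℝ) + 3 := hbound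
    _ ≤ 6 * M := by linarith
    _ = (12 / ((M:ℝ) + 1)) * ((M : ℝ) * ((M : ℝ) + 1) / 2) := by field_simp; ring
    _ ≤ (12 / ((M:ℝ) + 1)) * N := by
        apply mul_le_mul_of_nonneg_left hNbig
        positivity
    _ ≤ (12 / (M₀ : ℝ)) * N := by
        apply mul_le_mul_of_nonneg_right _ hNposR.le
        apply div_le_div_of_nonneg_left (by norm_num) hM₀pos
        linarith
    _ < ε * N := by
        apply mul_lt_mul_of_pos_right hM₀.2 hNposR

end Count

lemma pert_raw (aa z : ℕ → ℝ) (ha01 : ∀ n, aa n ∈ Set.Ico (0 : ℝ) 1)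
    (hud : ∀ a b : ℝ, 0 ≤ a → a < b → b ≤ 1 →
      Tendsto (fun N => (((Finset.range N).filter (fun n => aa n ∈ Set.Ico a b)).card : ℝ) / N)
        atTop (nhds (b - a)))
    (hcl : Tendsto (fun n => z n - aa n) atTop (nhds 0)) :
    ∀ a b : ℝ, 0 ≤ a → a < b → b ≤ 1 →
      Tendsto (fun N => (((Finset.range N).filter (fun n => z n ∈ Set.Ico a b)).card : ℝ) / N)
        atTop (nhds (b - a)) := by
  intro a b ha hab hb
  rw [Metric.tendsto_atTop]
  intro ε hε
  set η := min (ε / 8) ((b - a) / 4) with hη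
  have hηpos : 0 < η := by
    apply lt_min <;> linarith
  have hη8 : 8 * η ≤ ε := by
    have := min_le_left (ε / 8) ((b - a) / 4)
    rw [hη]; linarith
  have hη4 : 4 * η ≤ b - a := by
    have := min_le_right (ε / 8) ((b - a) / 4)
    rw [hη]; linarith
  -- outer interval
  set a₁ := max 0 (a - η) with ha₁
  set b₁ := min 1 (b + η) with hb₁
  have ha₁0 : 0 ≤ a₁ := le_max_left _ _
  have ha₁a : a₁ ≤ a := max_le ha (by linarith)
  have hbb₁ : b ≤ b₁ := le_min hb (by linarith)
  have hb₁1 : b₁ ≤ 1 := min_le_left _ _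
  have hb₁b : b₁ ≤ b + η := min_le_right _ _
  have ha₁a' : a - η ≤ a₁ := le_max_right _ _
  have houter : b₁ - a₁ ≤ (b - a) + 2 * η := by linarith
  -- inner interval
  set a₂ := a + η with ha₂
  set b₂ := b - η with hb₂
  have h1 := hud a₁ b₁ ha₁0 (lt_of_le_of_lt ha₁a (lt_of_lt_of_le hab hbb₁)) hb₁1
  have h2 := hud a₂ b₂ (by linarith) (by rw [ha₂, hb₂]; linarith) (by rw [hb₂]; linarith)
  rw [Metric.tendsto_atTop] at h1 h2
  obtain ⟨N₁, hN₁⟩ := h1 η hηpos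
  obtain ⟨N₂, hN₂⟩ := h2 η hηpos
  -- closeness
  have hcl' : ∀ᶠ n in atTop, |z n - aa n| ≤ η := by
    have := Metric.tendsto_nhds.mp hcl η hηpos
    filter_upwards [this] with n hn
    rw [Real.dist_eq, sub_zero] at hn
    exact hn.le
  obtain ⟨N₃, hN₃⟩ := eventually_atTop.mp hcl'
  obtain ⟨N₄, hN₄⟩ : ∃ N₄ : ℕ, ∀ N ≥ N₄, (N₃ : ℝ) / N < η := by
    have : Tendsto (fun N : ℕ => (N₃ : ℝ) / N) atTop (nhds 0) :=
      tendsto_const_nhds.div_atTop tendsto_natCast_atTop_atTop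
    obtain ⟨N₄, hN₄⟩ := (Metric.tendsto_atTop.mp this) η hηpos
    refine ⟨N₄, fun N hN => ?_⟩
    have := hN₄ N hN
    rw [Real.dist_eq, sub_zero] at this
    exact lt_of_le_of_lt (le_abs_self _) this
  refine ⟨max (max N₁ N₂) (max N₃ N₄) + 1, fun N hN => ?_⟩
  have hNN₁ : N ≥ N₁ := by omega
  have hNN₂ : N ≥ N₂ := by omega
  have hNN₃ : N ≥ N₃ := by omega
  have hNN₄ : N ≥ N₄ := by omega
  have hNpos : 0 < N := by omega
  have hNR : (0 : ℝ) < N := by exact_mod_cast hNpos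
  set Cz := ((Finset.range N).filter (fun n => z n ∈ Set.Ico a b)).card with hCz
  set C₁ := ((Finset.range N).filter (fun n => aa n ∈ Set.Ico a₁ b₁)).card with hC₁
  set C₂ := ((Finset.range N).filter (fun n => aa n ∈ Set.Ico a₂ b₂)).card with hC₂
  -- upper: Cz ≤ C₁ + N₃
  have hup : Cz ≤ C₁ + N₃ := by
    have hsub : (Finset.range N).filter (fun n => z n ∈ Set.Ico a b)
        ⊆ ((Finset.range N).filter (fun n => aa n ∈ Set.Ico a₁ b₁)) ∪ Finset.range N₃ := by
      intro n hn
      simp only [Finset.mem_filter, Finset.mem_range, Set.mem_Ico] at hn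
      rcases lt_or_ge n N₃ with h | h
      · exact Finset.mem_union_right _ (Finset.mem_range.mpr h)
      · apply Finset.mem_union_left
        simp only [Finset.mem_filter, Finset.mem_range, Set.mem_Ico]
        refine ⟨hn.1, ?_, ?_⟩
        · have h6 := hN₃ n h
          rw [abs_le] at h6
          rw [ha₁]
          exact max_le (ha01 n).1 (by linarith [hn.2.1])
        · have h6 := hN₃ n h
          rw [abs_le] at h6
          rw [hb₁]
          exact lt_min_iff.mpr ⟨(ha01 n).2, by linarith [hn.2.2]⟩
    calc Cz ≤ (((Finset.range N).filter (fun n => aa n ∈ Set.Ico a₁ b₁))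
          ∪ Finset.range N₃).card := Finset.card_le_card hsub
      _ ≤ C₁ + N₃ := by
          have := Finset.card_union_le
            ((Finset.range N).filter (fun n => aa n ∈ Set.Ico a₁ b₁)) (Finset.range N₃)
          rw [Finset.card_range] at this
          exact this
  -- lower: C₂ ≤ Cz + N₃
  have hlow : C₂ ≤ Cz + N₃ := by
    have hsub : (Finset.range N).filter (fun n => aa n ∈ Set.Ico a₂ b₂)
        ⊆ ((Finset.range N).filter (fun n => z n ∈ Set.Ico a b)) ∪ Finset.range N₃ := by
      intro n hn
      simp only [Finset.mem_filter, Finset.mem_range, Set.mem_Ico] at hn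
      rcases lt_or_ge n N₃ with h | h
      · exact Finset.mem_union_right _ (Finset.mem_range.mpr h)
      · apply Finset.mem_union_left
        simp only [Finset.mem_filter, Finset.mem_range, Set.mem_Ico]
        have h6 := hN₃ n h
        rw [abs_le] at h6
        refine ⟨hn.1, by rw [ha₂] at hn; linarith [hn.2.1], by rw [hb₂] at hn; linarith [hn.2.2]⟩
    calc C₂ ≤ (((Finset.range N).filter (fun n => z n ∈ Set.Ico a b))
          ∪ Finset.range N₃).card := Finset.card_le_card hsub
      _ ≤ Cz + N₃ := by
          have := Finset.card_union_le
            ((Finset.range N).filter (fun n => z n ∈ Set.Ico a b)) (Finset.range N₃)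
          rw [Finset.card_range] at this
          exact this
  have e1 := hN₁ N hNN₁
  have e2 := hN₂ N hNN₂
  rw [Real.dist_eq] at e1 e2
  rw [abs_lt] at e1 e2
  have e3 := hN₄ N hNN₄
  have hCzR : (Cz : ℝ) ≤ (C₁ : ℝ) + N₃ := by exact_mod_cast hup
  have hC₂R : (C₂ : ℝ) ≤ (Cz : ℝ) + N₃ := by exact_mod_cast hlow
  rw [Real.dist_eq, abs_lt]
  have hdu : (Cz : ℝ) / N ≤ (C₁ : ℝ) / N + (N₃ : ℝ) / N := by
    rw [← add_div]
    exact div_le_div_of_nonneg_right hCzR hNR.le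
  have hdl : (C₂ : ℝ) / N - (N₃ : ℝ) / N ≤ (Cz : ℝ) / N := by
    rw [sub_le_iff_le_add, ← add_div]
    exact div_le_div_of_nonneg_right hC₂R hNR.le
  constructor
  · -- lower bound
    have : (b₂ - a₂) - η < (C₂ : ℝ) / N := by linarith [e2.1]
    have hb2a2 : b₂ - a₂ = b - a - 2 * η := by rw [hb₂, ha₂]; ring
    linarith
  · have : (C₁ : ℝ) / N < (b₁ - a₁) + η := by linarith [e1.2]
    linarith

section Digits

/-- the "good" region for the orbit of `r*x`: away from the bad interval
`[1/2, 1/2 + 1/(2s))` by margin `1/(8s)`. -/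
def good (s : ℕ) (y : ℝ) : Prop :=
  Int.fract y < 1 / 2 - 1 / (8 * (s : ℝ)) ∨
    1 / 2 + 1 / (2 * (s : ℝ)) + 1 / (8 * (s : ℝ)) < Int.fract y

lemma exists_good {p : ℤ} {s : ℕ} (hs : 2 ≤ s) (hcop : IsCoprime p (s : ℤ)) (u : ℝ) :
    ∃ t : ℕ, t < s ∧ good s (u + (p : ℝ) * t / s) := by
  have hsR : (2 : ℝ) ≤ s := by exact_mod_cast hs
  have hs0 : (0 : ℝ) < s := by linarith
  have E1 : 1 / (2 * (s : ℝ)) = (1 / 2) * (1 / s) := by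
    rw [one_div, mul_inv, one_div]
    ring
  have E2 : 1 / (8 * (s : ℝ)) = (1 / 8) * (1 / s) := by
    rw [one_div, mul_inv, one_div]
    ring
  have E3 : (0 : ℝ) < 1 / s := by positivity
  have E4 : 1 / (s : ℝ) ≤ 1 / 2 := by
    rw [div_le_div_iff₀ hs0 (by norm_num)]
    linarith
  obtain ⟨a, b, hab⟩ := hcop
  have hspos : (0 : ℤ) < (s : ℤ) := by exact_mod_cast (by omega : 0 < s)
  set t₁ : ℤ := a % (s : ℤ) with ht₁
  have ht₁0 : 0 ≤ t₁ := Int.emod_nonneg a (by omega)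
  have ht₁lt : t₁ < s := Int.emod_lt_of_pos a hspos
  have hdiv : (s : ℤ) ∣ p * t₁ - 1 :=
    ⟨-p * (a / (s : ℤ)) - b, by rw [ht₁, Int.emod_def]; linear_combination hab⟩
  obtain ⟨c, hc⟩ := hdiv
  have hpt₁ : (p : ℝ) * (t₁ : ℝ) = 1 + (c : ℝ) * s := by
    have h5 : (p * t₁ : ℤ) = 1 + (s : ℤ) * c := by linarith
    have := congrArg (fun z : ℤ => (z : ℝ)) h5
    push_cast at this
    linarith
  set tn : ℕ := t₁.toNat with htn
  have htncast : (tn : ℤ) = t₁ := Int.toNat_of_nonneg ht₁0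
  have htnlt : tn < s := by omega
  by_contra hcon
  push_neg at hcon
  have h0 := hcon 0 (by omega)
  have h1 := hcon tn htnlt
  rw [good] at h0 h1
  push_neg at h0 h1
  simp only [Nat.cast_zero, mul_zero, zero_div, add_zero] at h0
  obtain ⟨h0a, h0b⟩ := h0
  have hfr1 : Int.fract (u + (p : ℝ) * tn / s) = Int.fract (Int.fract u + 1 / s) := by
    have htnR : ((tn : ℝ)) = ((t₁ : ℝ)) := by exact_mod_cast congrArg Int.cast htncast
    have : (p : ℝ) * (tn : ℝ) / s = 1 / s + (c : ℝ) := by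
      rw [htnR, hpt₁]
      field_simp
    rw [this, show u + (1 / s + (c : ℝ)) = u + 1 / s + (c : ℝ) by ring,
      Int.fract_add_intCast]
    conv_lhs => rw [show u = (⌊u⌋ : ℝ) + Int.fract u by rw [Int.floor_add_fract]]
    rw [add_assoc, Int.fract_intCast_add]
  rw [hfr1] at h1
  obtain ⟨h1a, h1b⟩ := h1
  set v := Int.fract u with hv
  have hv0 : 0 ≤ v := Int.fract_nonneg u
  have hv1 : v < 1 := Int.fract_lt_one u
  rcases lt_or_ge (v + 1 / s) 1 with hcase | hcase
  · have hself : Int.fract (v + 1 / s) = v + 1 / s :=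
      Int.fract_eq_self.mpr ⟨by positivity, hcase⟩
    rw [hself] at h1a h1b
    linarith
  · have h7 : v + 1 / s - 1 < 1 := by linarith
    have h8 : 0 ≤ v + 1 / s - 1 := by linarith
    have hself : Int.fract (v + 1 / s) = v + 1 / s - 1 := by
      have h9 : Int.fract (v + 1 / s - 1) = v + 1 / s - 1 := Int.fract_eq_self.mpr ⟨h8, h7⟩
      rw [← h9]
      conv_lhs => rw [show v + 1 / (s : ℝ) = (v + 1 / s - 1) + ((1 : ℤ) : ℝ) by push_cast; ring]
      rw [Int.fract_add_intCast]
    rw [hself] at h1a h1b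
    linarith

/-- pick a good shift -/
def tPick (p : ℤ) (s : ℕ) (u : ℝ) : ℕ :=
  if h : ∃ t : ℕ, t < s ∧ good s (u + (p : ℝ) * t / s) then h.choose else 0

lemma tPick_spec {p : ℤ} {s : ℕ} (hs : 2 ≤ s) (hcop : IsCoprime p (s : ℤ)) (u : ℝ) :
    tPick p s u < s ∧ good s (u + (p : ℝ) * (tPick p s u) / s) := by
  rw [tPick]
  have h := exists_good hs hcop u
  rw [dif_pos h]
  exact h.choose_spec

/-- stability: if `y` is good and `z` is within `1/(8s)` of `y` then
`fract z` avoids `[1/2, 1/2 + 1/(2s))`. -/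
lemma good_avoid {s : ℕ} (hs : 2 ≤ s) {y z : ℝ} (hg : good s y)
    (hclose : |z - y| ≤ 1 / (8 * (s : ℝ))) :
    Int.fract z ∉ Set.Ico (1 / 2 : ℝ) (1 / 2 + 1 / (2 * (s : ℝ))) := by
  have hsR : (2 : ℝ) ≤ s := by exact_mod_cast hs
  have hs0 : (0 : ℝ) < s := by linarith
  set δ := 1 / (8 * (s : ℝ)) with hδ
  have hδpos : 0 < δ := by positivity
  have hδ16 : δ ≤ 1 / 16 := by
    rw [hδ, div_le_div_iff₀ (by linarith) (by norm_num)]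
    linarith
  have h2s : 1 / (2 * (s : ℝ)) ≤ 1 / 4 := by
    rw [div_le_div_iff₀ (by linarith) (by norm_num)]
    linarith
  have h2spos : 0 < 1 / (2 * (s : ℝ)) := by positivity
  set v := Int.fract y with hv
  have hv0 : 0 ≤ v := Int.fract_nonneg y
  have hv1 : v < 1 := Int.fract_lt_one y
  set d := z - y with hd
  have hdle1 : -δ ≤ d := neg_le_of_abs_le hclose
  have hdle2 : d ≤ δ := le_of_abs_le hclose
  have hfz : Int.fract z = Int.fract (v + d) := by
    have : z = (⌊y⌋ : ℝ) + (v + d) := by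
      rw [hv, hd]
      rw [show (⌊y⌋ : ℝ) + (Int.fract y + (z - y)) = (Int.fract y + (⌊y⌋ : ℝ)) + (z - y) by ring]
      rw [Int.fract_add_floor]
      ring
    rw [this, Int.fract_intCast_add]
  intro hmem
  obtain ⟨hm1, hm2⟩ := hmem
  rcases lt_or_ge (v + d) 0 with hw | hw
  · have hfr : Int.fract (v + d) = v + d + 1 := by
      have h9 : Int.fract (v + d + 1) = v + d + 1 :=
        Int.fract_eq_self.mpr ⟨by linarith, by linarith⟩
      rw [← h9]
      conv_lhs => rw [show v + d = (v + d + 1) - ((1 : ℤ) : ℝ) by push_cast; ring]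
      rw [Int.fract_sub_intCast]
    rw [hfz, hfr] at hm2
    linarith
  · rcases lt_or_ge (v + d) 1 with hw1 | hw1
    · have hfr : Int.fract (v + d) = v + d := Int.fract_eq_self.mpr ⟨hw, hw1⟩
      rw [hfz, hfr] at hm1 hm2
      rcases hg with hg | hg
      · rw [← hv] at hg
        linarith
      · rw [← hv] at hg
        linarith
    · have hfr : Int.fract (v + d) = v + d - 1 := by
        have h9 : Int.fract (v + d - 1) = v + d - 1 :=
          Int.fract_eq_self.mpr ⟨by linarith, by linarith⟩
        rw [← h9]
        conv_lhs => rw [show v + d = (v + d - 1) + ((1 : ℤ) : ℝ) by push_cast; ring]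
        rw [Int.fract_add_intCast]
      rw [hfz, hfr] at hm1
      linarith

end Digits

section Construction

variable (q : ℕ → ℕ) (p : ℤ) (s : ℕ)

/-- digit chooser at position `n`, given `K (n-1) = k`. -/
def eDig (N₀ : ℕ) (n k : ℕ) : ℕ :=
  if N₀ + 1 ≤ n then
    min ⌊(q n : ℝ) * aseq (n - 1)⌋₊ (q n - s) +
      tPick p s ((p : ℝ) * ((k : ℝ) * (q n : ℝ) +
        ((min ⌊(q n : ℝ) * aseq (n - 1)⌋₊ (q n - s) : ℕ) : ℝ)) / (s : ℝ) +
        ((p : ℝ) / (s : ℝ)) * aseq n)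
  else 0

/-- partial "integer part" sequence. -/
def KK (N₀ : ℕ) : ℕ → ℕ
  | 0 => 0
  | n + 1 => KK N₀ n * q (n + 1) + eDig q p s N₀ (n + 1) (KK N₀ n)

/-- the digit sequence. -/
def ED (N₀ n : ℕ) : ℕ := eDig q p s N₀ n (KK q p s N₀ (n - 1))

lemma KK_succ (N₀ n : ℕ) :
    KK q p s N₀ (n + 1) = KK q p s N₀ n * q (n + 1) + ED q p s N₀ (n + 1) := by
  rw [KK, ED]
  simp

/-- generic tail sum of a digit sequence. -/
def tailS (E : ℕ → ℕ) (n : ℕ) : ℝ :=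
  ∑' j : ℕ, (E (n + 1 + j) : ℝ) / ∏ i ∈ Finset.Icc (n + 1) (n + 1 + j), (q i : ℝ)

variable {q p s}

section TailLemmas

variable {E : ℕ → ℕ} (hq : BasicSeq q)
include hq

lemma prod_q_pos {c d : ℕ} (hc : 1 ≤ c) : 0 < ∏ i ∈ Finset.Icc c d, (q i : ℝ) := by
  apply Finset.prod_pos
  intro i hi
  have : 1 ≤ i := le_trans hc (Finset.mem_Icc.mp hi).1
  have := hq i this
  positivity

lemma prod_q_ge {c d : ℕ} (hc : 1 ≤ c) :
    (2 : ℝ) ^ (Finset.Icc c d).card ≤ ∏ i ∈ Finset.Icc c d, (q i : ℝ) := by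
  rw [← Finset.prod_const]
  apply Finset.prod_le_prod
  · intro i _; norm_num
  · intro i hi
    have : 1 ≤ i := le_trans hc (Finset.mem_Icc.mp hi).1
    exact_mod_cast hq i this

lemma term_le (hE : ∀ i, 1 ≤ i → E i < q i) (n j : ℕ) :
    (E (n + 1 + j) : ℝ) / ∏ i ∈ Finset.Icc (n + 1) (n + 1 + j), (q i : ℝ)
      ≤ (1 / 2) ^ j := by
  have hsplit : ∏ i ∈ Finset.Icc (n + 1) (n + 1 + j), (q i : ℝ)
      = (∏ i ∈ Finset.Icc (n + 1) (n + j), (q i : ℝ)) * (q (n + 1 + j) : ℝ) := by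
    rw [show n + 1 + j = (n + j) + 1 by ring]
    exact Finset.prod_Icc_succ_top (by omega) _
  have hpos1 : (0 : ℝ) < ∏ i ∈ Finset.Icc (n + 1) (n + j), (q i : ℝ) := prod_q_pos hq (by omega)
  have hq1 : (0 : ℝ) < (q (n + 1 + j) : ℝ) := by
    have := hq (n + 1 + j) (by omega)
    positivity
  have hEle : (E (n + 1 + j) : ℝ) ≤ (q (n + 1 + j) : ℝ) := by
    exact_mod_cast (hE (n + 1 + j) (by omega)).le
  have hprodge : (2 : ℝ) ^ j ≤ ∏ i ∈ Finset.Icc (n + 1) (n + j), (q i : ℝ) := by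
    have hcard : (Finset.Icc (n + 1) (n + j)).card = j := by
      rw [Nat.card_Icc]; omega
    have := prod_q_ge hq (c := n + 1) (d := n + j) (by omega)
    rwa [hcard] at this
  rw [hsplit]
  calc (E (n + 1 + j) : ℝ) / ((∏ i ∈ Finset.Icc (n + 1) (n + j), (q i : ℝ)) * (q (n + 1 + j) : ℝ))
      ≤ (q (n + 1 + j) : ℝ) / ((∏ i ∈ Finset.Icc (n + 1) (n + j), (q i : ℝ)) * (q (n + 1 + j) : ℝ)) := by
        gcongr
    _ = 1 / (∏ i ∈ Finset.Icc (n + 1) (n + j), (q i : ℝ)) := by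
        field_simp <;> ring
    _ ≤ 1 / (2 : ℝ) ^ j := one_div_le_one_div_of_le (by positivity) hprodge
    _ = (1 / 2) ^ j := by rw [div_pow, one_pow]

lemma term_nonneg (n j : ℕ) :
    0 ≤ (E (n + 1 + j) : ℝ) / ∏ i ∈ Finset.Icc (n + 1) (n + 1 + j), (q i : ℝ) := by
  apply div_nonneg (by positivity) (prod_q_pos hq (by omega)).le

lemma summable_tail (hE : ∀ i, 1 ≤ i → E i < q i) (n : ℕ) :
    Summable (fun j : ℕ => (E (n + 1 + j) : ℝ) / ∏ i ∈ Finset.Icc (n + 1) (n + 1 + j), (q i : ℝ)) :=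
  Summable.of_nonneg_of_le (term_nonneg hq n) (term_le hq hE n) summable_geometric_two

lemma tailS_nonneg (n : ℕ) : 0 ≤ tailS q E n :=
  tsum_nonneg (term_nonneg hq n)

lemma tailS_succ (hE : ∀ i, 1 ≤ i → E i < q i) (n : ℕ) :
    tailS q E n = ((E (n + 1) : ℝ) + tailS q E (n + 1)) / (q (n + 1) : ℝ) := by
  have hsum := summable_tail hq hE n
  rw [tailS, Summable.tsum_eq_zero_add hsum]
  have h0 : (E (n + 1 + 0) : ℝ) / ∏ i ∈ Finset.Icc (n + 1) (n + 1 + 0), (q i : ℝ)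
      = (E (n + 1) : ℝ) / (q (n + 1) : ℝ) := by
    norm_num
  have hterm : ∀ j : ℕ,
      (E (n + 1 + (j + 1)) : ℝ) / ∏ i ∈ Finset.Icc (n + 1) (n + 1 + (j + 1)), (q i : ℝ)
      = ((E (n + 2 + j) : ℝ) / ∏ i ∈ Finset.Icc (n + 2) (n + 2 + j), (q i : ℝ)) / (q (n + 1) : ℝ) := by
    intro j
    have hprodsplit : ∏ i ∈ Finset.Icc (n + 1) (n + 1 + (j + 1)), (q i : ℝ)
        = (q (n + 1) : ℝ) * ∏ i ∈ Finset.Icc (n + 2) (n + 2 + j), (q i : ℝ) := by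
      rw [show n + 1 + (j + 1) = n + 2 + j by omega]
      rw [Finset.Icc_eq_cons_Ioc (by omega : n + 1 ≤ n + 2 + j), Finset.prod_cons]
      rw [← Finset.Icc_add_one_left_eq_Ioc]
      rfl
    rw [hprodsplit]
    rw [show n + 1 + (j + 1) = n + 2 + j by ring]
    have hqpos : (0 : ℝ) < (q (n + 1) : ℝ) := by
      have := hq (n + 1) (by omega); positivity
    have hppos : (0 : ℝ) < ∏ i ∈ Finset.Icc (n + 2) (n + 2 + j), (q i : ℝ) :=
      prod_q_pos hq (by omega)
    rw [div_div]
    rw [mul_comm]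
  rw [h0]
  have heq2 : ∑' j : ℕ, (E (n + 1 + (j + 1)) : ℝ) / ∏ i ∈ Finset.Icc (n + 1) (n + 1 + (j + 1)), (q i : ℝ)
      = ∑' j : ℕ, ((E (n + 2 + j) : ℝ) / ∏ i ∈ Finset.Icc (n + 2) (n + 2 + j), (q i : ℝ)) / (q (n + 1) : ℝ) := by
    congr 1
    funext j
    exact hterm j
  rw [heq2, tsum_div_const]
  have htail : tailS q E (n + 1)
      = ∑' j : ℕ, (E (n + 2 + j) : ℝ) / ∏ i ∈ Finset.Icc (n + 2) (n + 2 + j), (q i : ℝ) := by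
    rw [tailS]
  rw [← htail]
  ring

lemma tailS_lt_one (hE : ∀ i, 1 ≤ i → E i < q i)
    (hstrict : ∀ m : ℕ, ∃ i, m + 1 ≤ i ∧ E i + 1 < q i) (n : ℕ) :
    tailS q E n < 1 := by
  set g : ℕ → ℝ := fun j => ((q (n + 1 + j) : ℝ) - 1) / ∏ i ∈ Finset.Icc (n + 1) (n + 1 + j), (q i : ℝ) with hg
  have hqge : ∀ j : ℕ, (2 : ℝ) ≤ (q (n + 1 + j) : ℝ) := by
    intro j
    exact_mod_cast hq (n + 1 + j) (by omega)
  have hsplit : ∀ j : ℕ, ∏ i ∈ Finset.Icc (n + 1) (n + 1 + j), (q i : ℝ)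
      = (∏ i ∈ Finset.Icc (n + 1) (n + j), (q i : ℝ)) * (q (n + 1 + j) : ℝ) := by
    intro j
    rw [show n + 1 + j = (n + j) + 1 by ring]
    exact Finset.prod_Icc_succ_top (by omega) _
  have hpos1 : ∀ j : ℕ, (0 : ℝ) < ∏ i ∈ Finset.Icc (n + 1) (n + j), (q i : ℝ) :=
    fun j => prod_q_pos hq (by omega)
  have hpos2 : ∀ j : ℕ, (0 : ℝ) < ∏ i ∈ Finset.Icc (n + 1) (n + 1 + j), (q i : ℝ) :=
    fun j => prod_q_pos hq (by omega)
  have hprodge : ∀ j : ℕ, (2 : ℝ) ^ j ≤ ∏ i ∈ Finset.Icc (n + 1) (n + j), (q i : ℝ) := by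
    intro j
    have hcard : (Finset.Icc (n + 1) (n + j)).card = j := by
      rw [Nat.card_Icc]; omega
    have := prod_q_ge hq (c := n + 1) (d := n + j) (by omega)
    rwa [hcard] at this
  have hgterm : ∀ j, g j = 1 / (∏ i ∈ Finset.Icc (n + 1) (n + j), (q i : ℝ))
      - 1 / (∏ i ∈ Finset.Icc (n + 1) (n + 1 + j), (q i : ℝ)) := by
    intro j
    simp only [hg]
    rw [hsplit j]
    have h1 := hpos1 j
    have h2 : (0 : ℝ) < (q (n + 1 + j) : ℝ) := by linarith [hqge j]
    field_simp <;> ring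
  have hpartial : ∀ J : ℕ, ∑ j ∈ Finset.range J, g j
      = 1 - 1 / (∏ i ∈ Finset.Icc (n + 1) (n + J), (q i : ℝ)) := by
    intro J
    induction J with
    | zero => simp
    | succ J ih =>
      rw [Finset.sum_range_succ, ih, hgterm J]
      rw [show n + 1 + J = n + (J + 1) by ring]
      ring
  have hgle : ∀ j, g j ≤ (1 / 2) ^ j := by
    intro j
    simp only [hg]
    rw [hsplit j]
    have h2 : (0 : ℝ) < (q (n + 1 + j) : ℝ) := by linarith [hqge j]
    calc ((q (n + 1 + j) : ℝ) - 1) / ((∏ i ∈ Finset.Icc (n + 1) (n + j), (q i : ℝ)) * (q (n + 1 + j) : ℝ))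
        ≤ (q (n + 1 + j) : ℝ) / ((∏ i ∈ Finset.Icc (n + 1) (n + j), (q i : ℝ)) * (q (n + 1 + j) : ℝ)) :=
          div_le_div_of_nonneg_right (by linarith) (le_of_lt (mul_pos (hpos1 j) h2))
      _ = 1 / (∏ i ∈ Finset.Icc (n + 1) (n + j), (q i : ℝ)) := by
          rw [mul_comm, ← div_div]
          congr 1
          exact div_self (ne_of_gt h2)
      _ ≤ 1 / (2 : ℝ) ^ j := one_div_le_one_div_of_le (by positivity) (hprodge j)
      _ = (1 / 2) ^ j := by rw [div_pow, one_pow]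
  have hgnonneg : ∀ j, 0 ≤ g j := by
    intro j
    apply div_nonneg _ (hpos2 j).le
    linarith [hqge j]
  have hgsummable : Summable g := Summable.of_nonneg_of_le hgnonneg hgle summable_geometric_two
  have hgsum : ∑' j, g j = 1 := by
    have h1 : Tendsto (fun J => ∑ j ∈ Finset.range J, g j) atTop (nhds (∑' j, g j)) :=
      hgsummable.hasSum.tendsto_sum_nat
    have h3 : Tendsto (fun J : ℕ => 1 / (∏ i ∈ Finset.Icc (n + 1) (n + J), (q i : ℝ))) atTop (nhds 0) := by
      apply squeeze_zero_norm (a := fun J : ℕ => (1 / 2 : ℝ) ^ J)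
      · intro J
        have hposJ : (0 : ℝ) < ∏ i ∈ Finset.Icc (n + 1) (n + J), (q i : ℝ) :=
          prod_q_pos hq (by omega)
        rw [Real.norm_eq_abs, abs_of_pos (one_div_pos.mpr hposJ)]
        calc 1 / (∏ i ∈ Finset.Icc (n + 1) (n + J), (q i : ℝ))
            ≤ 1 / (2 : ℝ) ^ J := one_div_le_one_div_of_le (by positivity) (hprodge J)
          _ = (1 / 2) ^ J := by rw [div_pow, one_pow]
      · exact tendsto_pow_atTop_nhds_zero_of_lt_one (by norm_num) (by norm_num)
    have h2 : Tendsto (fun J => ∑ j ∈ Finset.range J, g j) atTop (nhds 1) := by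
      have heq : (fun J : ℕ => ∑ j ∈ Finset.range J, g j)
          = fun J : ℕ => 1 - 1 / (∏ i ∈ Finset.Icc (n + 1) (n + J), (q i : ℝ)) := by
        funext J
        exact hpartial J
      rw [heq]
      have := h3.const_sub 1
      simpa using this
    have := tendsto_nhds_unique h1 h2
    linarith
  obtain ⟨i, hi1, hi2⟩ := hstrict n
  set j₀ := i - (n + 1) with hj₀
  have hij : n + 1 + j₀ = i := by omega
  have hflt : (E (n + 1 + j₀) : ℝ) / ∏ i ∈ Finset.Icc (n + 1) (n + 1 + j₀), (q i : ℝ) < g j₀ := by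
    simp only [hg]
    have hnum : (E (n + 1 + j₀) : ℝ) < (q (n + 1 + j₀) : ℝ) - 1 := by
      rw [hij]
      have : ((E i + 1 : ℕ) : ℝ) < ((q i : ℕ) : ℝ) := by exact_mod_cast hi2
      push_cast at this
      linarith
    exact div_lt_div_of_pos_right hnum (hpos2 j₀)
  have hfle : ∀ j, (E (n + 1 + j) : ℝ) / ∏ i ∈ Finset.Icc (n + 1) (n + 1 + j), (q i : ℝ) ≤ g j := by
    intro j
    simp only [hg]
    have h5 : (E (n + 1 + j) : ℝ) ≤ (q (n + 1 + j) : ℝ) - 1 := by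
      have h6 : E (n + 1 + j) + 1 ≤ q (n + 1 + j) := hE (n + 1 + j) (by omega)
      have h7 : ((E (n + 1 + j) + 1 : ℕ) : ℝ) ≤ ((q (n + 1 + j) : ℕ) : ℝ) := by exact_mod_cast h6
      push_cast at h7
      linarith
    exact div_le_div_of_nonneg_right h5 (hpos2 j).le
  have := Summable.tsum_lt_tsum hfle hflt (summable_tail hq hE n) hgsummable
  rw [hgsum] at this
  exact this

end TailLemmas

section EDLemmas

variable {q : ℕ → ℕ} {p : ℤ} {s N₀ : ℕ}

lemma ED_lt (hq : BasicSeq q) (hs : 2 ≤ s) (hcop : IsCoprime p (s : ℤ))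
    (hN₀ : ∀ n, N₀ ≤ n → 4 * s ≤ q n) :
    ∀ n, 1 ≤ n → ED q p s N₀ n < q n := by
  intro n hn
  rw [ED, eDig]
  split
  · rename_i hcond
    have hqn : 4 * s ≤ q n := hN₀ n (by omega)
    suffices h : ∀ t, t < s → min ⌊(q n : ℝ) * aseq (n - 1)⌋₊ (q n - s) + t < q n by
      exact h _ ((tPick_spec hs hcop _).1)
    intro t ht
    have hmin : min ⌊(q n : ℝ) * aseq (n - 1)⌋₊ (q n - s) ≤ q n - s := min_le_right _ _
    omega
  · have := hq n hn
    omega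

lemma ED_strict (hq : BasicSeq q) (hs : 2 ≤ s) (hcop : IsCoprime p (s : ℤ))
    (hN₀ : ∀ n, N₀ ≤ n → 4 * s ≤ q n) :
    ∀ m : ℕ, ∃ i, m + 1 ≤ i ∧ ED q p s N₀ i + 1 < q i := by
  intro m
  set M := max (m + 1) N₀ with hM
  set i := tri M + 1 with hi
  have htriM : M ≤ tri M := le_tri M
  have hcond : N₀ + 1 ≤ i := by omega
  have hqi : 4 * s ≤ q i := hN₀ i (by omega)
  refine ⟨i, by omega, ?_⟩
  rw [ED, eDig, if_pos hcond]
  have haseq : aseq (i - 1) = 0 := by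
    rw [show i - 1 = tri M by omega]
    exact aseq_tri M
  have hfloor : ⌊(q i : ℝ) * aseq (i - 1)⌋₊ = 0 := by
    rw [haseq, mul_zero, Nat.floor_zero]
  rw [hfloor]
  suffices h : ∀ t, t < s → min 0 (q i - s) + t + 1 < q i by
    exact h _ ((tPick_spec hs hcop _).1)
  intro t ht
  omega

lemma ED_good (hs : 2 ≤ s) (hcop : IsCoprime p (s : ℤ))
    (hN₀ : ∀ n, N₀ ≤ n → 4 * s ≤ q n) :
    ∀ n, N₀ ≤ n →
      good s ((p : ℝ) * (KK q p s N₀ (n + 1) : ℝ) / s + ((p : ℝ) / s) * aseq (n + 1)) := by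
  intro n hn
  have hcond : N₀ + 1 ≤ n + 1 := by omega
  set mm := min ⌊(q (n + 1) : ℝ) * aseq (n + 1 - 1)⌋₊ (q (n + 1) - s) with hmm
  set u := (p : ℝ) * ((KK q p s N₀ (n + 1 - 1) : ℝ) * (q (n + 1) : ℝ) + (mm : ℝ)) / (s : ℝ) +
      ((p : ℝ) / (s : ℝ)) * aseq (n + 1) with hu
  set t := tPick p s u with htdef
  have htp := (tPick_spec hs hcop u).2
  have hED : ED q p s N₀ (n + 1) = mm + t := by
    rw [htdef, hu, hmm, ED, eDig, if_pos hcond]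
  have hKK : KK q p s N₀ (n + 1) = KK q p s N₀ n * q (n + 1) + (mm + t) := by
    rw [KK_succ, hED]
  have hKKcast : ((KK q p s N₀ (n + 1) : ℕ) : ℝ)
      = (KK q p s N₀ n : ℝ) * (q (n + 1) : ℝ) + (mm : ℝ) + (t : ℝ) := by
    rw [hKK]
    push_cast
    ring
  have hsR : (0 : ℝ) < (s : ℝ) := by
    have : (0 : ℕ) < s := by omega
    exact_mod_cast this
  have harg : u + (p : ℝ) * (t : ℝ) / s
      = (p : ℝ) * (KK q p s N₀ (n + 1) : ℝ) / s + ((p : ℝ) / s) * aseq (n + 1) := by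
    rw [hKKcast, hu]
    rw [show n + 1 - 1 = n from rfl]
    field_simp
    ring
  rwa [harg] at htp

lemma ED_approx (hq : BasicSeq q) (hs : 2 ≤ s) (hcop : IsCoprime p (s : ℤ))
    (hN₀ : ∀ n, N₀ ≤ n → 4 * s ≤ q n) :
    ∀ n, N₀ ≤ n →
      |(ED q p s N₀ (n + 1) : ℝ) - (q (n + 1) : ℝ) * aseq n| ≤ (s : ℝ) := by
  intro n hn
  have hcond : N₀ + 1 ≤ n + 1 := by omega
  have hqn : 4 * s ≤ q (n + 1) := hN₀ (n + 1) (by omega)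
  have hsq : s ≤ q (n + 1) := by omega
  set A := (p : ℝ) * ((KK q p s N₀ (n + 1 - 1) : ℝ) * (q (n + 1) : ℝ) +
      ((min ⌊(q (n + 1) : ℝ) * aseq (n + 1 - 1)⌋₊ (q (n + 1) - s) : ℕ) : ℝ)) / (s : ℝ) +
      ((p : ℝ) / (s : ℝ)) * aseq (n + 1) with hA
  have hED : ∃ t : ℕ, t < s ∧ ED q p s N₀ (n + 1)
      = min ⌊(q (n + 1) : ℝ) * aseq (n + 1 - 1)⌋₊ (q (n + 1) - s) + t := by
    refine ⟨tPick p s A, (tPick_spec hs hcop A).1, ?_⟩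
    rw [hA, ED, eDig, if_pos hcond]
  obtain ⟨t, htlt, hEDval⟩ := hED
  rw [hEDval, show n + 1 - 1 = n by omega]
  have hQ4 : (4 : ℝ) * s ≤ (q (n + 1) : ℝ) := by exact_mod_cast hqn
  have hsR : (2 : ℝ) ≤ (s : ℝ) := by exact_mod_cast hs
  have hQ0 : (0 : ℝ) < (q (n + 1) : ℝ) := by linarith
  have hα0 : 0 ≤ aseq n := (aseq_mem n).1
  have hα1 : aseq n < 1 := (aseq_mem n).2
  have hQα0 : 0 ≤ (q (n + 1) : ℝ) * aseq n := by positivity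
  have hfl : (⌊(q (n + 1) : ℝ) * aseq n⌋₊ : ℝ) ≤ (q (n + 1) : ℝ) * aseq n := Nat.floor_le hQα0
  have hfl2 : (q (n + 1) : ℝ) * aseq n < (⌊(q (n + 1) : ℝ) * aseq n⌋₊ : ℝ) + 1 :=
    Nat.lt_floor_add_one _
  have htR : (t : ℝ) ≤ (s : ℝ) - 1 := by
    have h7 : ((t + 1 : ℕ) : ℝ) ≤ (s : ℝ) := by exact_mod_cast htlt
    push_cast at h7
    linarith
  have htnn : (0 : ℝ) ≤ (t : ℝ) := Nat.cast_nonneg _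
  have hqsR : ((q (n + 1) - s : ℕ) : ℝ) = (q (n + 1) : ℝ) - (s : ℝ) := by
    push_cast [hsq]
    ring
  rcases le_or_gt (⌊(q (n + 1) : ℝ) * aseq n⌋₊) (q (n + 1) - s) with hcase | hcase
  · have hmmval : min ⌊(q (n + 1) : ℝ) * aseq n⌋₊ (q (n + 1) - s) = ⌊(q (n + 1) : ℝ) * aseq n⌋₊ :=
      min_eq_left hcase
    rw [hmmval]
    push_cast
    rw [abs_le]
    constructor <;> nlinarith
  · have hmmval : min ⌊(q (n + 1) : ℝ) * aseq n⌋₊ (q (n + 1) - s) = q (n + 1) - s :=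
      min_eq_right hcase.le
    rw [hmmval]
    have hQαlow : (q (n + 1) : ℝ) - (s : ℝ) + 1 ≤ (q (n + 1) : ℝ) * aseq n := by
      have h8 : q (n + 1) - s + 1 ≤ ⌊(q (n + 1) : ℝ) * aseq n⌋₊ := by omega
      have h9 : ((q (n + 1) - s + 1 : ℕ) : ℝ) ≤ (⌊(q (n + 1) : ℝ) * aseq n⌋₊ : ℝ) := by
        exact_mod_cast h8
      push_cast [hsq] at h9
      linarith
    have hQαup : (q (n + 1) : ℝ) * aseq n < (q (n + 1) : ℝ) := by nlinarith
    push_cast [hsq]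
    rw [abs_le]
    constructor <;> nlinarith

end EDLemmas

section MainId

variable {q : ℕ → ℕ} {p : ℤ} {s N₀ : ℕ}

lemma prod_KK (hq : BasicSeq q) (hs : 2 ≤ s) (hcop : IsCoprime p (s : ℤ))
    (hN₀ : ∀ n, N₀ ≤ n → 4 * s ≤ q n) :
    ∀ n, (cantorProd q n : ℝ) * tailS q (ED q p s N₀) 0
      = (KK q p s N₀ n : ℝ) + tailS q (ED q p s N₀) n := by
  have hE := ED_lt hq hs hcop hN₀
  intro n
  induction n with
  | zero =>
    rw [cantorProd]
    simp [KK]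
  | succ n ih =>
    have hq0 : (0 : ℝ) < (q (n + 1) : ℝ) := by
      have := hq (n + 1) (by omega)
      positivity
    have hcp : (cantorProd q (n + 1) : ℝ) = (cantorProd q n : ℝ) * (q (n + 1) : ℝ) := by
      rw [cantorProd, cantorProd, Finset.prod_Icc_succ_top (by omega : 1 ≤ n + 1)]
      push_cast
      ring
    have h1 : tailS q (ED q p s N₀) n * (q (n + 1) : ℝ)
        = (ED q p s N₀ (n + 1) : ℝ) + tailS q (ED q p s N₀) (n + 1) := by
      rw [tailS_succ hq hE n]
      field_simp
    have hKKc : (KK q p s N₀ (n + 1) : ℝ)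
        = (KK q p s N₀ n : ℝ) * (q (n + 1) : ℝ) + (ED q p s N₀ (n + 1) : ℝ) := by
      rw [KK_succ]
      push_cast
      ring
    rw [hcp]
    linear_combination (q (n + 1) : ℝ) * ih + h1 - hKKc

lemma TQ_tail (hq : BasicSeq q) (hs : 2 ≤ s) (hcop : IsCoprime p (s : ℤ))
    (hN₀ : ∀ n, N₀ ≤ n → 4 * s ≤ q n) (n : ℕ) :
    TQ q n (tailS q (ED q p s N₀) 0) = tailS q (ED q p s N₀) n := by
  have hE := ED_lt hq hs hcop hN₀
  have hstrict := ED_strict hq hs hcop hN₀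
  have h0 : 0 ≤ tailS q (ED q p s N₀) n := tailS_nonneg hq n
  have h1 : tailS q (ED q p s N₀) n < 1 := tailS_lt_one hq hE hstrict n
  rw [TQ, prod_KK hq hs hcop hN₀ n]
  rw [show ((KK q p s N₀ n : ℕ) : ℝ) = (((KK q p s N₀ n : ℕ) : ℤ) : ℝ) by push_cast; ring]
  rw [Int.fract_intCast_add]
  exact Int.fract_eq_self.mpr ⟨h0, h1⟩

lemma tail_approx (hq : BasicSeq q) (hs : 2 ≤ s) (hcop : IsCoprime p (s : ℤ))
    (hN₀ : ∀ n, N₀ ≤ n → 4 * s ≤ q n) :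
    ∀ n, N₀ ≤ n →
      |tailS q (ED q p s N₀) n - aseq n| ≤ ((s : ℝ) + 2) / (q (n + 1) : ℝ) := by
  have hE := ED_lt hq hs hcop hN₀
  intro n hn
  have hq4 : 4 * s ≤ q (n + 1) := hN₀ (n + 1) (by omega)
  have hq0 : (0 : ℝ) < (q (n + 1) : ℝ) := by
    have := hq (n + 1) (by omega)
    positivity
  have hts := tailS_succ hq hE n
  have happrox := ED_approx hq hs hcop hN₀ n hn
  have ht0 : 0 ≤ tailS q (ED q p s N₀) (n + 1) := tailS_nonneg hq (n + 1)
  have ht1 : tailS q (ED q p s N₀) (n + 1) ≤ 1 := by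
    have := tailS_lt_one hq hE (ED_strict hq hs hcop hN₀) (n + 1)
    linarith
  rw [hts]
  have heq : ((ED q p s N₀ (n + 1) : ℝ) + tailS q (ED q p s N₀) (n + 1)) / (q (n + 1) : ℝ) - aseq n
      = ((ED q p s N₀ (n + 1) : ℝ) - (q (n + 1) : ℝ) * aseq n + tailS q (ED q p s N₀) (n + 1))
        / (q (n + 1) : ℝ) := by
    field_simp
    ring
  rw [heq, abs_div, abs_of_pos hq0, div_le_div_iff₀ hq0 hq0]
  have habs : |(ED q p s N₀ (n + 1) : ℝ) - (q (n + 1) : ℝ) * aseq n + tailS q (ED q p s N₀) (n + 1)|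
      ≤ (s : ℝ) + 1 := by
    calc |(ED q p s N₀ (n + 1) : ℝ) - (q (n + 1) : ℝ) * aseq n + tailS q (ED q p s N₀) (n + 1)|
        ≤ |(ED q p s N₀ (n + 1) : ℝ) - (q (n + 1) : ℝ) * aseq n| + |tailS q (ED q p s N₀) (n + 1)| :=
          abs_add_le _ _
      _ ≤ (s : ℝ) + 1 := by
          rw [abs_of_nonneg ht0]
          linarith
  nlinarith [habs, hq0]

end MainId

end Construction

end Stmt7Aux


theorem stmt_7 (q : ℕ → ℕ) (hq : BasicSeq q) (hinf : InfiniteInLimit q)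
    (r : ℚ) (hr : ∀ m : ℤ, (m : ℚ) ≠ r) :
    ∃ x : ℝ, QDistNormal q x ∧ ¬ QDistNormal q ((r : ℝ) * x) := by
  classical
  open Stmt7Aux in
  set s := r.den with hsdef
  set p := r.num with hpdef
  have hs : 2 ≤ s := by
    rcases Nat.lt_or_ge s 2 with h | h
    · exfalso
      have hpos : 0 < s := r.pos
      have h1 : s = 1 := by omega
      have h2 : (r.num : ℚ) = r := by
        conv_rhs => rw [← Rat.num_div_den r]
        rw [← hsdef, h1]
        norm_num
      exact hr r.num h2
    · exact h
  have hsR2 : (2 : ℝ) ≤ (s : ℝ) := by exact_mod_cast hs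
  have hsR0 : (0 : ℝ) < (s : ℝ) := by linarith
  have hcop : IsCoprime p (s : ℤ) := by
    rw [Int.isCoprime_iff_gcd_eq_one]
    simpa [Int.gcd, Int.natAbs_natCast] using r.reduced
  obtain ⟨N₀, hN₀⟩ : ∃ N₀, ∀ n, N₀ ≤ n → 4 * s ≤ q n := by
    obtain ⟨N₀, h⟩ := Filter.eventually_atTop.mp (hinf.eventually_ge_atTop (4 * s))
    exact ⟨N₀, h⟩
  set x := Stmt7Aux.tailS q (Stmt7Aux.ED q p s N₀) 0 with hx
  have hE := Stmt7Aux.ED_lt hq hs hcop hN₀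
  have hstrict := Stmt7Aux.ED_strict hq hs hcop hN₀
  have hTQ : ∀ n, TQ q n x = Stmt7Aux.tailS q (Stmt7Aux.ED q p s N₀) n :=
    fun n => Stmt7Aux.TQ_tail hq hs hcop hN₀ n
  have htail01 : ∀ n, Stmt7Aux.tailS q (Stmt7Aux.ED q p s N₀) n ∈ Set.Ico (0 : ℝ) 1 :=
    fun n => ⟨Stmt7Aux.tailS_nonneg hq n, Stmt7Aux.tailS_lt_one hq hE hstrict n⟩
  -- closeness of the orbit to aseq
  have hqtendsto : Tendsto (fun n : ℕ => (q (n + 1) : ℝ)) atTop atTop :=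
    tendsto_natCast_atTop_atTop.comp (hinf.comp (tendsto_add_atTop_nat 1))
  have hetendsto : Tendsto (fun n : ℕ => ((s : ℝ) + 2) / (q (n + 1) : ℝ)) atTop (nhds 0) :=
    tendsto_const_nhds.div_atTop hqtendsto
  have hcl : Tendsto (fun n => Stmt7Aux.tailS q (Stmt7Aux.ED q p s N₀) n - Stmt7Aux.aseq n)
      atTop (nhds 0) := by
    apply squeeze_zero_norm' _ hetendsto
    filter_upwards [eventually_atTop.mpr ⟨N₀, fun n hn => hn⟩] with n hn
    rw [Real.norm_eq_abs]
    exact Stmt7Aux.tail_approx hq hs hcop hN₀ n hn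
  refine ⟨x, ?_, ?_⟩
  · -- x is Q-distribution normal
    intro a b ha hab hb
    have hfr : ∀ n, Int.fract (TQ q n x) = Stmt7Aux.tailS q (Stmt7Aux.ED q p s N₀) n := by
      intro n
      rw [hTQ n]
      exact Int.fract_eq_self.mpr ⟨(htail01 n).1, (htail01 n).2⟩
    simp only [hfr]
    refine Stmt7Aux.pert_raw Stmt7Aux.aseq _ Stmt7Aux.aseq_mem ?_ hcl a b ha hab hb
    intro a' b' ha' hab' hb'
    have := Stmt7Aux.aseq_ud_raw ha' hab' hb'
    simpa [Stmt7Aux.cnt] using this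
  · -- r * x is not Q-distribution normal
    intro hUD
    have hlen : (0 : ℝ) < 1 / (2 * (s : ℝ)) := by positivity
    have hle1 : 1 / 2 + 1 / (2 * (s : ℝ)) ≤ 1 := by
      have : 1 / (2 * (s : ℝ)) ≤ 1 / 4 := by
        rw [div_le_div_iff₀ (by linarith) (by norm_num)]
        linarith
      linarith
    have h1 := hUD (1 / 2) (1 / 2 + 1 / (2 * (s : ℝ))) (by norm_num) (by linarith) hle1
    -- the orbit of r * x eventually avoids the bad interval
    have hrcast : (r : ℝ) = (p : ℝ) / (s : ℝ) := by
      rw [hpdef, hsdef]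
      exact Rat.cast_def r
    have havoid : ∃ N₂ : ℕ, ∀ n, N₂ ≤ n →
        Int.fract (TQ q n ((r : ℝ) * x)) ∉ Set.Ico (1 / 2 : ℝ) (1 / 2 + 1 / (2 * (s : ℝ))) := by
      have hrtendsto : Tendsto (fun n : ℕ => |(r : ℝ)| * (((s : ℝ) + 2) / (q (n + 1) : ℝ)))
          atTop (nhds 0) := by
        have := hetendsto.const_mul |(r : ℝ)|
        simpa using this
      obtain ⟨N₃, hN₃⟩ := (Metric.tendsto_atTop.mp hrtendsto) (1 / (8 * (s : ℝ))) (by positivity)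
      refine ⟨max N₃ (N₀ + 1), fun n hn => ?_⟩
      have hnN₃ : N₃ ≤ n := le_trans (le_max_left _ _) hn
      have hnN₀ : N₀ + 1 ≤ n := le_trans (le_max_right _ _) hn
      -- good point
      have hgood := Stmt7Aux.ED_good hs hcop hN₀ (n - 1) (by omega)
      rw [show n - 1 + 1 = n by omega] at hgood
      -- the actual orbit point
      have horbit : TQ q n ((r : ℝ) * x)
          = Int.fract ((r : ℝ) * ((Stmt7Aux.KK q p s N₀ n : ℝ)
            + Stmt7Aux.tailS q (Stmt7Aux.ED q p s N₀) n)) := by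
        rw [TQ]
        congr 1
        rw [show (cantorProd q n : ℝ) * ((r : ℝ) * x) = (r : ℝ) * ((cantorProd q n : ℝ) * x) by ring]
        rw [Stmt7Aux.prod_KK hq hs hcop hN₀ n]
      have hdist : |(r : ℝ) * ((Stmt7Aux.KK q p s N₀ n : ℝ)
            + Stmt7Aux.tailS q (Stmt7Aux.ED q p s N₀) n)
          - ((p : ℝ) * (Stmt7Aux.KK q p s N₀ n : ℝ) / s + ((p : ℝ) / s) * Stmt7Aux.aseq n)|
          ≤ 1 / (8 * (s : ℝ)) := by
        have heq9 : (r : ℝ) * ((Stmt7Aux.KK q p s N₀ n : ℝ)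
              + Stmt7Aux.tailS q (Stmt7Aux.ED q p s N₀) n)
            - ((p : ℝ) * (Stmt7Aux.KK q p s N₀ n : ℝ) / s + ((p : ℝ) / s) * Stmt7Aux.aseq n)
            = (r : ℝ) * (Stmt7Aux.tailS q (Stmt7Aux.ED q p s N₀) n - Stmt7Aux.aseq n) := by
          rw [hrcast]
          field_simp
          ring
        rw [heq9, abs_mul]
        have h8 := Stmt7Aux.tail_approx hq hs hcop hN₀ n (by omega)
        have h9 := hN₃ n hnN₃
        rw [Real.dist_eq, sub_zero] at h9
        have h10 : |(r : ℝ)| * |Stmt7Aux.tailS q (Stmt7Aux.ED q p s N₀) n - Stmt7Aux.aseq n|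
            ≤ |(r : ℝ)| * (((s : ℝ) + 2) / (q (n + 1) : ℝ)) :=
          mul_le_mul_of_nonneg_left h8 (abs_nonneg _)
        have h11 : |(r : ℝ)| * (((s : ℝ) + 2) / (q (n + 1) : ℝ)) < 1 / (8 * (s : ℝ)) := by
          have := le_abs_self (|(r : ℝ)| * (((s : ℝ) + 2) / (q (n + 1) : ℝ)))
          linarith [h9, this]
        linarith
      rw [horbit, Int.fract_fract]
      exact Stmt7Aux.good_avoid hs hgood hdist
    obtain ⟨N₂, hN₂⟩ := havoid
    -- hence the counting function tends to 0
    have h2 : Tendsto (fun N => (((Finset.range N).filter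
        (fun n => Int.fract (TQ q n ((r : ℝ) * x)) ∈
          Set.Ico (1 / 2 : ℝ) (1 / 2 + 1 / (2 * (s : ℝ))))).card : ℝ) / N) atTop (nhds 0) := by
      have hbound : ∀ N : ℕ, (((Finset.range N).filter
          (fun n => Int.fract (TQ q n ((r : ℝ) * x)) ∈
            Set.Ico (1 / 2 : ℝ) (1 / 2 + 1 / (2 * (s : ℝ))))).card : ℝ) ≤ N₂ := by
        intro N
        have hsub : (Finset.range N).filter
            (fun n => Int.fract (TQ q n ((r : ℝ) * x)) ∈
              Set.Ico (1 / 2 : ℝ) (1 / 2 + 1 / (2 * (s : ℝ)))) ⊆ Finset.range N₂ := by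
          intro n hn
          simp only [Finset.mem_filter, Finset.mem_range] at hn
          rcases Nat.lt_or_ge n N₂ with h | h
          · exact Finset.mem_range.mpr h
          · exact absurd hn.2 (hN₂ n h)
        have := Finset.card_le_card hsub
        rw [Finset.card_range] at this
        exact_mod_cast this
      apply squeeze_zero_norm' _ (tendsto_const_nhds.div_atTop tendsto_natCast_atTop_atTop
        : Tendsto (fun N : ℕ => (N₂ : ℝ) / N) atTop (nhds 0))
      filter_upwards [eventually_atTop.mpr ⟨1, fun (N : ℕ) (hN : 1 ≤ N) => hN⟩] with N hN
      have hNpos : (0 : ℝ) < N := by exact_mod_cast hN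
      rw [Real.norm_eq_abs, abs_of_nonneg (by positivity)]
      exact div_le_div_of_nonneg_right (hbound N) hNpos.le
    have := tendsto_nhds_unique h1 h2
    have hfin : 1 / 2 + 1 / (2 * (s : ℝ)) - 1 / 2 = 1 / (2 * (s : ℝ)) := by ring
    rw [hfin] at this
    linarith
end
end

section
/- Let x_1, x_2, …, x_N and y_1, y_2, …, y_N be two finite sequences in [0,1), and let ε_1, ε_2, …, ε_N be non-negative real numbers such that |x_n − y_n| ≤ ε_n for 1 ≤ n ≤ N. Then for any ε ≥ 0, |D_N(x_1,…,x_N) − D_N(y_1,…,y_N)| ≤ 2ε + N̄(ε)/N, where N̄(ε) is the number of indices n with 1 ≤ n ≤ N and ε_n > ε. -/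
open Filter Finset MeasureTheory

noncomputable section
open scoped Classical

private def discSet (N : ℕ) (x : ℕ → ℝ) : Set ℝ :=
  {d : ℝ | ∃ a b : ℝ, 0 ≤ a ∧ a ≤ b ∧ b ≤ 1 ∧
    d = |(((Finset.Icc 1 N).filter (fun n => x n ∈ Set.Ico a b)).card : ℝ) / N - (b - a)|}

private lemma discrepancy_eq (N : ℕ) (x : ℕ → ℝ) : discrepancy N x = sSup (discSet N x) := rfl

private lemma discSet_nonempty (N : ℕ) (x : ℕ → ℝ) : (discSet N x).Nonempty := by
  refine ⟨_, 0, 0, le_refl 0, le_refl 0, zero_le_one, rfl⟩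

private lemma aux_div_le_one {c N : ℕ} (h : c ≤ N) (hN : 1 ≤ N) : (c : ℝ) / N ≤ 1 := by
  rw [div_le_one (by exact_mod_cast hN : (0:ℝ) < N)]
  exact_mod_cast h

private lemma discSet_bdd (N : ℕ) (hN : 1 ≤ N) (x : ℕ → ℝ) : BddAbove (discSet N x) := by
  refine ⟨2, ?_⟩
  rintro d ⟨a, b, ha, hab, hb, rfl⟩
  have h1 : (0:ℝ) ≤ (((Finset.Icc 1 N).filter (fun n => x n ∈ Set.Ico a b)).card : ℝ) / N :=
    div_nonneg (by positivity) (by positivity)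
  have hc : ((Finset.Icc 1 N).filter (fun n => x n ∈ Set.Ico a b)).card ≤ N :=
    le_trans (Finset.card_filter_le _ _) (by simp)
  have h2 := aux_div_le_one hc hN
  rw [abs_sub_le_iff]
  constructor <;> linarith

private lemma discrepancy_nonneg (N : ℕ) (hN : 1 ≤ N) (x : ℕ → ℝ) : 0 ≤ discrepancy N x := by
  have h0 : (0:ℝ) ∈ discSet N x := by
    refine ⟨0, 0, le_refl 0, le_refl 0, zero_le_one, ?_⟩
    simp [Set.Ico_self]
  exact le_csSup (discSet_bdd N hN x) h0

private lemma mem_le_disc (N : ℕ) (hN : 1 ≤ N) (x : ℕ → ℝ) {a b : ℝ}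
    (ha : 0 ≤ a) (hab : a ≤ b) (hb : b ≤ 1) :
    |(((Finset.Icc 1 N).filter (fun n => x n ∈ Set.Ico a b)).card : ℝ) / N - (b - a)| ≤
      discrepancy N x :=
  le_csSup (discSet_bdd N hN x) ⟨a, b, ha, hab, hb, rfl⟩

private lemma key_ineq (N : ℕ) (hN : 1 ≤ N) (x y ε : ℕ → ℝ)
    (hy : ∀ n ∈ Finset.Icc 1 N, y n ∈ Set.Ico (0 : ℝ) 1)
    (hxy : ∀ n ∈ Finset.Icc 1 N, |x n - y n| ≤ ε n)
    (e : ℝ) (he : 0 ≤ e) :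
    discrepancy N x ≤ discrepancy N y +
      (2 * e + (((Finset.Icc 1 N).filter (fun n => e < ε n)).card : ℝ) / N) := by
  have hNpos : (0:ℝ) < N := by exact_mod_cast hN
  set M : ℝ := (((Finset.Icc 1 N).filter (fun n => e < ε n)).card : ℝ) with hM
  have hMnn : 0 ≤ M / N := div_nonneg (by positivity) hNpos.le
  have hDy : 0 ≤ discrepancy N y := discrepancy_nonneg N hN y
  rw [discrepancy_eq]
  apply csSup_le (discSet_nonempty N x)
  rintro d ⟨a, b, ha, hab, hb, rfl⟩
  rw [abs_sub_le_iff]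
  constructor
  · -- A_x/N - (b-a) ≤ D_y + 2e + M/N
    set a' : ℝ := max (a - e) 0 with ha'
    set b' : ℝ := min (b + e) 1 with hb'
    have h1 : 0 ≤ a' := le_max_right _ _
    have h2 : a' ≤ b' := by
      rw [max_le_iff, le_min_iff, le_min_iff]
      refine ⟨⟨by linarith, by linarith⟩, ⟨by linarith, zero_le_one⟩⟩
    have h3 : b' ≤ 1 := min_le_right _ _
    have hsub : (Finset.Icc 1 N).filter (fun n => x n ∈ Set.Ico a b) ⊆
        ((Finset.Icc 1 N).filter (fun n => y n ∈ Set.Ico a' b')) ∪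
        ((Finset.Icc 1 N).filter (fun n => e < ε n)) := by
      intro n hn
      rw [Finset.mem_filter] at hn
      obtain ⟨hn1, hn2⟩ := hn
      rw [Finset.mem_union, Finset.mem_filter, Finset.mem_filter]
      by_cases hc : e < ε n
      · exact Or.inr ⟨hn1, hc⟩
      · left
        refine ⟨hn1, ?_, ?_⟩
        · have h4 := abs_le.mp (le_trans (hxy n hn1) (not_lt.mp hc))
          have h5 := (hy n hn1).1
          rw [ha', max_le_iff]
          exact ⟨by have := hn2.1; linarith [h4.2], h5⟩
        · have h4 := abs_le.mp (le_trans (hxy n hn1) (not_lt.mp hc))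
          have h5 := (hy n hn1).2
          rw [hb', lt_min_iff]
          exact ⟨by have := hn2.2; linarith [h4.1], h5⟩
    have hcard : ((((Finset.Icc 1 N).filter (fun n => x n ∈ Set.Ico a b)).card : ℝ)) ≤
        (((Finset.Icc 1 N).filter (fun n => y n ∈ Set.Ico a' b')).card : ℝ) + M := by
      rw [hM]
      have := le_trans (Finset.card_le_card hsub) (Finset.card_union_le _ _)
      exact_mod_cast this
    have hd : (((Finset.Icc 1 N).filter (fun n => y n ∈ Set.Ico a' b')).card : ℝ) / N
        - (b' - a') ≤ discrepancy N y :=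
      le_trans (le_abs_self _) (mem_le_disc N hN y h1 h2 h3)
    have hba : b' - a' ≤ (b - a) + 2 * e := by
      have := min_le_left (b + e) 1
      have := le_max_left (a - e) 0
      rw [hb', ha']; linarith
    have hdiv : ((((Finset.Icc 1 N).filter (fun n => x n ∈ Set.Ico a b)).card : ℝ)) / N ≤
        ((((Finset.Icc 1 N).filter (fun n => y n ∈ Set.Ico a' b')).card : ℝ) + M) / N := by
      gcongr
    rw [add_div] at hdiv
    linarith
  · -- (b-a) - A_x/N ≤ D_y + 2e + M/N
    have hAx : 0 ≤ ((((Finset.Icc 1 N).filter (fun n => x n ∈ Set.Ico a b)).card : ℝ)) / N :=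
      div_nonneg (by positivity) hNpos.le
    by_cases hcase : b - a ≤ 2 * e
    · linarith
    · push_neg at hcase
      set a' : ℝ := a + e with ha'
      set b' : ℝ := b - e with hb'
      have h1 : 0 ≤ a' := by linarith
      have h2 : a' ≤ b' := by rw [ha', hb']; linarith
      have h3 : b' ≤ 1 := by rw [hb']; linarith
      have hsub : (Finset.Icc 1 N).filter (fun n => y n ∈ Set.Ico a' b') ⊆
          ((Finset.Icc 1 N).filter (fun n => x n ∈ Set.Ico a b)) ∪
          ((Finset.Icc 1 N).filter (fun n => e < ε n)) := by
        intro n hn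
        rw [Finset.mem_filter] at hn
        obtain ⟨hn1, hn2⟩ := hn
        rw [Finset.mem_union, Finset.mem_filter, Finset.mem_filter]
        by_cases hc : e < ε n
        · exact Or.inr ⟨hn1, hc⟩
        · left
          have h4 := abs_le.mp (le_trans (hxy n hn1) (not_lt.mp hc))
          refine ⟨hn1, ?_, ?_⟩
          · have := hn2.1; rw [ha'] at this; linarith [h4.1]
          · have := hn2.2; rw [hb'] at this; linarith [h4.2]
      have hcard : ((((Finset.Icc 1 N).filter (fun n => y n ∈ Set.Ico a' b')).card : ℝ)) ≤
          (((Finset.Icc 1 N).filter (fun n => x n ∈ Set.Ico a b)).card : ℝ) + M := by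
        rw [hM]
        have := le_trans (Finset.card_le_card hsub) (Finset.card_union_le _ _)
        exact_mod_cast this
      have hd : (b' - a') -
          (((Finset.Icc 1 N).filter (fun n => y n ∈ Set.Ico a' b')).card : ℝ) / N
          ≤ discrepancy N y := by
        refine le_trans ?_ (mem_le_disc N hN y h1 h2 h3)
        rw [abs_sub_comm]
        exact le_abs_self _
      have hdiv : ((((Finset.Icc 1 N).filter (fun n => y n ∈ Set.Ico a' b')).card : ℝ)) / N ≤
          ((((Finset.Icc 1 N).filter (fun n => x n ∈ Set.Ico a b)).card : ℝ) + M) / N := by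
        gcongr
      rw [add_div] at hdiv
      have hba : (b - a) = (b' - a') + 2 * e := by rw [ha', hb']; ring
      linarith

/-- discrepancy perturbation lemma. -/
theorem stmt_11 (N : ℕ) (hN : 1 ≤ N) (x y ε : ℕ → ℝ)
    (hx : ∀ n ∈ Finset.Icc 1 N, x n ∈ Set.Ico (0 : ℝ) 1)
    (hy : ∀ n ∈ Finset.Icc 1 N, y n ∈ Set.Ico (0 : ℝ) 1)
    (hε : ∀ n ∈ Finset.Icc 1 N, 0 ≤ ε n)
    (hxy : ∀ n ∈ Finset.Icc 1 N, |x n - y n| ≤ ε n)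
    (e : ℝ) (he : 0 ≤ e) :
    |discrepancy N x - discrepancy N y| ≤
      2 * e + (((Finset.Icc 1 N).filter (fun n => e < ε n)).card : ℝ) / N := by
  have h1 := key_ineq N hN x y ε hy hxy e he
  have h2 := key_ineq N hN y x ε hx (fun n hn => by rw [abs_sub_comm]; exact hxy n hn) e he
  rw [abs_sub_le_iff]
  constructor <;> linarith
end
end

section
/- Let Q = (q_n) be a basic sequence that is infinite in limit and let x = E_0.E_1E_2… w.r.t. Q. Then x is Q-distribution normal if and only if the sequence (E_n/q_n)_{n≥1} is uniformly distributed mod 1. -/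
open Filter Finset MeasureTheory

noncomputable section
open scoped Classical

namespace S12

lemma cp_succ (q : ℕ → ℕ) (n : ℕ) : cantorProd q (n+1) = cantorProd q n * q (n+1) :=
  Finset.prod_Icc_succ_top (Nat.le_add_left 1 n) q

lemma cp_pos {q : ℕ → ℕ} (hq : BasicSeq q) (n : ℕ) : 0 < cantorProd q n :=
  Finset.prod_pos (fun i hi => by have := hq i (Finset.mem_Icc.1 hi).1; omega)

lemma cp_ge {q : ℕ → ℕ} (hq : BasicSeq q) (n : ℕ) : 2 ^ n ≤ cantorProd q n := by
  have := Finset.pow_card_le_prod (Finset.Icc 1 n) q 2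
    (fun i hi => hq i (Finset.mem_Icc.1 hi).1)
  simpa [Nat.card_Icc, cantorProd] using this

lemma cp_Ioc (q : ℕ → ℕ) (k : ℕ) : cantorProd q k = ∏ i ∈ Finset.Ioc 0 k, q i := by
  rw [cantorProd, ← Finset.Icc_add_one_left_eq_Ioc]
  rfl

lemma cp_mul (q : ℕ → ℕ) {m n : ℕ} (h : m ≤ n) :
    cantorProd q n = cantorProd q m * ∏ i ∈ Finset.Ioc m n, q i := by
  rw [cp_Ioc, cp_Ioc, Finset.prod_Ioc_consecutive q (Nat.zero_le m) h]

lemma cp_dvd (q : ℕ → ℕ) {m n : ℕ} (h : m ≤ n) : cantorProd q m ∣ cantorProd q n :=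
  ⟨∏ i ∈ Finset.Ioc m n, q i, cp_mul q h⟩

end S12

namespace S12
variable {q E : ℕ → ℕ}

/-- The `j`-th term of the Cantor series. -/
def F (q E : ℕ → ℕ) (j : ℕ) : ℝ := (E (j+1) : ℝ) / (cantorProd q (j+1) : ℝ)

lemma F_nonneg (j : ℕ) : 0 ≤ F q E j := by
  unfold F; positivity

lemma F_le (hq : BasicSeq q) (hE1 : ∀ n, 1 ≤ n → E n < q n) (j : ℕ) :
    F q E j ≤ (1/2 : ℝ)^j := by
  unfold F
  have h1 : (E (j+1) : ℝ) ≤ (q (j+1) : ℝ) := by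
    exact_mod_cast (hE1 (j+1) (by omega)).le
  have h2 : (0:ℝ) < cantorProd q (j+1) := by exact_mod_cast cp_pos hq (j+1)
  have h3 : (0:ℝ) < cantorProd q j := by exact_mod_cast cp_pos hq j
  have h4 : (0:ℝ) < q (j+1) := by have := hq (j+1) (by omega); positivity
  have hcp : (cantorProd q (j+1) : ℝ) = cantorProd q j * q (j+1) := by
    exact_mod_cast congrArg (Nat.cast : ℕ → ℝ) (cp_succ q j)
  have step1 : (E (j+1) : ℝ) / (cantorProd q (j+1) : ℝ) ≤ 1 / (cantorProd q j : ℝ) := by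
    rw [hcp]
    rw [div_le_div_iff₀ (by positivity) h3]
    calc (E (j+1) : ℝ) * cantorProd q j ≤ (q (j+1) : ℝ) * cantorProd q j := by
          exact mul_le_mul_of_nonneg_right h1 h3.le
      _ = 1 * ((cantorProd q j : ℝ) * q (j+1)) := by ring
  refine step1.trans ?_
  rw [div_le_iff₀ h3]
  have h5 : (2:ℝ)^j ≤ (cantorProd q j : ℝ) := by exact_mod_cast cp_ge hq j
  calc (1:ℝ) = (1/2:ℝ)^j * 2^j := by rw [← mul_pow]; norm_num
    _ ≤ (1/2:ℝ)^j * cantorProd q j :=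
        mul_le_mul_of_nonneg_left h5 (by positivity)

lemma F_summable (hq : BasicSeq q) (hE1 : ∀ n, 1 ≤ n → E n < q n) :
    Summable (F q E) :=
  Summable.of_nonneg_of_le (fun j => F_nonneg j) (F_le hq hE1)
    (summable_geometric_of_lt_one (by norm_num) (by norm_num))

/-- Ratio `cantorProd q n / cantorProd q (n+j)`. -/
def G (q : ℕ → ℕ) (n j : ℕ) : ℝ := (cantorProd q n : ℝ) / (cantorProd q (n+j) : ℝ)

lemma G_pos (hq : BasicSeq q) (n j : ℕ) : 0 < G q n j := by
  unfold G
  have := cp_pos hq n; have := cp_pos hq (n+j); positivity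

lemma G_zero (hq : BasicSeq q) (n : ℕ) : G q n 0 = 1 := by
  unfold G
  have := cp_pos hq n
  rw [Nat.add_zero, div_self (by positivity)]

lemma G_succ (hq : BasicSeq q) (n j : ℕ) : G q n (j+1) = G q n j / q (n+j+1) := by
  unfold G
  have hcp : (cantorProd q (n+j+1) : ℝ) = cantorProd q (n+j) * q (n+j+1) := by
    exact_mod_cast congrArg (Nat.cast : ℕ → ℝ) (cp_succ q (n+j))
  have h1 : (0:ℝ) < cantorProd q (n+j) := by exact_mod_cast cp_pos hq (n+j)
  have h2 : (0:ℝ) < q (n+j+1) := by have := hq (n+j+1) (by omega); positivity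
  rw [show n + (j+1) = n+j+1 from rfl, hcp]
  field_simp

lemma G_mul (hq : BasicSeq q) (n j : ℕ) : (q (n+j+1) : ℝ) * G q n (j+1) = G q n j := by
  have h2 : (0:ℝ) < q (n+j+1) := by have := hq (n+j+1) (by omega); positivity
  rw [G_succ hq]
  field_simp

lemma G_antitone (hq : BasicSeq q) (n j : ℕ) : G q n (j+1) ≤ G q n j := by
  have h2 : (1:ℝ) ≤ q (n+j+1) := by have := hq (n+j+1) (by omega); exact_mod_cast by omega
  rw [G_succ hq]
  calc G q n j / q (n+j+1) ≤ G q n j / 1 :=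
        div_le_div_of_nonneg_left (G_pos hq n j).le (by norm_num) h2
    _ = G q n j := div_one _

/-- `term n j = cantorProd q n * F (j + n)` equals `E(n+j+1) * G n (j+1)`. -/
lemma term_eq (hq : BasicSeq q) (n j : ℕ) :
    (cantorProd q n : ℝ) * F q E (j + n) = (E (n+j+1) : ℝ) * G q n (j+1) := by
  unfold F G
  have h : j + n + 1 = n + (j + 1) := by omega
  rw [h]
  have h2 : n + j + 1 = n + (j+1) := by omega
  rw [h2]
  ring

lemma term_le (hq : BasicSeq q) (hE1 : ∀ n, 1 ≤ n → E n < q n) (n j : ℕ) :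
    (cantorProd q n : ℝ) * F q E (j + n) ≤ G q n j - G q n (j+1) := by
  rw [term_eq hq]
  have hlt : (E (n+j+1) : ℝ) ≤ (q (n+j+1) : ℝ) - 1 := by
    have := hE1 (n+j+1) (by omega)
    have h : E (n+j+1) + 1 ≤ q (n+j+1) := this
    have hc : ((E (n+j+1) : ℕ) : ℝ) + 1 ≤ ((q (n+j+1) : ℕ) : ℝ) := by exact_mod_cast h
    linarith
  have hG := G_pos hq n (j+1)
  have hmul := G_mul hq n j
  nlinarith [mul_le_mul_of_nonneg_right hlt hG.le]

end S12

namespace S12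
variable {q E : ℕ → ℕ}

/-- The remainder (tail) of the Cantor series after position `n`, rescaled. -/
def tail (q E : ℕ → ℕ) (n : ℕ) : ℝ := (cantorProd q n : ℝ) * ∑' j, F q E (j + n)

lemma F_shift_summable (hq : BasicSeq q) (hE1 : ∀ n, 1 ≤ n → E n < q n) (n : ℕ) :
    Summable (fun j => F q E (j + n)) :=
  (summable_nat_add_iff n).2 (F_summable hq hE1)

lemma term_summable (hq : BasicSeq q) (hE1 : ∀ n, 1 ≤ n → E n < q n) (n : ℕ) :
    Summable (fun j => (cantorProd q n : ℝ) * F q E (j + n)) :=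
  (F_shift_summable hq hE1 n).mul_left _

lemma tele_summable (hq : BasicSeq q) (n : ℕ) :
    Summable (fun j => G q n j - G q n (j+1)) := by
  apply summable_of_sum_range_le (c := 1)
  · intro j; linarith [G_antitone hq n j]
  · intro m
    rw [Finset.sum_range_sub' (fun j => G q n j)]
    have := G_pos hq n m
    rw [G_zero hq]
    linarith

lemma tele_tsum_le (hq : BasicSeq q) (n : ℕ) :
    ∑' j, (G q n j - G q n (j+1)) ≤ 1 := by
  apply Summable.tsum_le_of_sum_range_le (tele_summable hq n)
  intro m
  rw [Finset.sum_range_sub' (fun j => G q n j)]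
  have := G_pos hq n m
  rw [G_zero hq]
  linarith

lemma tail_eq_tsum (hq : BasicSeq q) (hE1 : ∀ n, 1 ≤ n → E n < q n) (n : ℕ) :
    tail q E n = ∑' j, (cantorProd q n : ℝ) * F q E (j + n) := by
  rw [tail, ← tsum_mul_left]

lemma tail_nonneg (hq : BasicSeq q) (hE1 : ∀ n, 1 ≤ n → E n < q n) (n : ℕ) :
    0 ≤ tail q E n := by
  rw [tail]
  have h1 : (0:ℝ) ≤ cantorProd q n := by positivity
  exact mul_nonneg h1 (tsum_nonneg (fun j => F_nonneg (q := q) (E := E) (j + n)))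

lemma tail_le_one (hq : BasicSeq q) (hE1 : ∀ n, 1 ≤ n → E n < q n) (n : ℕ) :
    tail q E n ≤ 1 := by
  rw [tail_eq_tsum hq hE1]
  refine le_trans ((term_summable hq hE1 n).tsum_le_tsum (fun j => term_le hq hE1 n j)
    (tele_summable hq n)) (tele_tsum_le hq n)

lemma tail_lt_one (hq : BasicSeq q) (hE1 : ∀ n, 1 ≤ n → E n < q n)
    (hinfE : {n | 1 ≤ n ∧ E n ≠ q n - 1}.Infinite) (n : ℕ) :
    tail q E n < 1 := by
  obtain ⟨m, hm, hmn⟩ := hinfE.exists_gt n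
  set j₀ := m - n - 1 with hj₀
  have hm' : m = n + j₀ + 1 := by omega
  set c := G q n (j₀ + 1) with hc
  have hcpos : 0 < c := G_pos hq n (j₀+1)
  have key : tail q E n + c ≤ 1 := by
    have hsum_ite : Summable (fun j : ℕ => if j = j₀ then c else 0) :=
      summable_of_ne_finset_zero (s := {j₀}) (fun j hj => by
        simp only [Finset.mem_singleton] at hj; simp [hj])
    have htsum_ite : ∑' j : ℕ, (if j = j₀ then c else 0) = c := tsum_ite_eq j₀ (fun _ => c)
    have heq : tail q E n + c =
        ∑' j, ((cantorProd q n : ℝ) * F q E (j + n) + if j = j₀ then c else 0) := by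
      rw [Summable.tsum_add (term_summable hq hE1 n) hsum_ite, htsum_ite, tail_eq_tsum hq hE1]
    rw [heq]
    refine le_trans (((term_summable hq hE1 n).add hsum_ite).tsum_le_tsum ?_
      (tele_summable hq n)) (tele_tsum_le hq n)
    intro j
    by_cases hj : j = j₀
    · subst hj
      rw [if_pos rfl]
      rw [term_eq hq]
      have hEm : (E (n+j₀+1) : ℝ) ≤ (q (n+j₀+1) : ℝ) - 2 := by
        have h1 : E (n+j₀+1) < q (n+j₀+1) := hE1 (n+j₀+1) (by omega)
        have h2 : E (n+j₀+1) ≠ q (n+j₀+1) - 1 := by rw [← hm']; exact hm.2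
        have h3 : 2 ≤ q (n+j₀+1) := hq (n+j₀+1) (by omega)
        have h4 : E (n+j₀+1) + 2 ≤ q (n+j₀+1) := by omega
        have hcast : ((E (n+j₀+1) : ℕ) : ℝ) + 2 ≤ ((q (n+j₀+1) : ℕ) : ℝ) := by exact_mod_cast h4
        linarith
      have hG := G_pos hq n (j₀+1)
      have hmul := G_mul hq n j₀
      have hm2 := mul_le_mul_of_nonneg_right hEm hG.le
      have hcc : c = G q n (j₀+1) := rfl
      rw [hcc]
      nlinarith
    · simp only [if_neg hj, add_zero]
      exact term_le hq hE1 n j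
  linarith

end S12


namespace S12
variable {q E : ℕ → ℕ} {x : ℝ}

lemma TQ_eq_tail (hq : BasicSeq q) (hE1 : ∀ n, 1 ≤ n → E n < q n)
    (hinfE : {n | 1 ≤ n ∧ E n ≠ q n - 1}.Infinite)
    (hx : x = (⌊x⌋ : ℝ) + ∑' n : ℕ, (E (n + 1) : ℝ) / (cantorProd q (n + 1) : ℝ)) (n : ℕ) :
    TQ q n x = tail q E n := by
  have hxF : x = (⌊x⌋ : ℝ) + ∑' j, F q E j := hx
  have hsplit : ∑' j, F q E j = ∑ j ∈ Finset.range n, F q E j + ∑' j, F q E (j + n) :=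
    (Summable.sum_add_tsum_nat_add n (F_summable hq hE1)).symm
  set K : ℤ := (cantorProd q n : ℤ) * ⌊x⌋ +
      ∑ j ∈ Finset.range n, ((E (j+1) * (cantorProd q n / cantorProd q (j+1)) : ℕ) : ℤ)
  have hK : (K : ℝ) = (cantorProd q n : ℝ) * (⌊x⌋ : ℝ) +
      (cantorProd q n : ℝ) * ∑ j ∈ Finset.range n, F q E j := by
    simp only [K, Int.cast_add, Int.cast_mul, Int.cast_natCast, Int.cast_sum]
    rw [Finset.mul_sum]
    congr 1
    apply Finset.sum_congr rfl
    intro j hj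
    have hjn : j + 1 ≤ n := Finset.mem_range.1 hj
    have hdvd := cp_dvd q hjn
    have hpos : ((cantorProd q (j+1) : ℕ) : ℝ) ≠ 0 := by
      have := cp_pos hq (j+1); positivity
    have key : ((E (j+1) * (cantorProd q n / cantorProd q (j+1)) : ℕ) : ℝ) =
        (cantorProd q n : ℝ) * F q E j := by
      rw [Nat.cast_mul, Nat.cast_div hdvd hpos]
      unfold F
      field_simp
    exact_mod_cast key
  have hmul : (cantorProd q n : ℝ) * x = (K : ℝ) + tail q E n := by
    rw [hK, tail]
    calc (cantorProd q n : ℝ) * x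
        = (cantorProd q n : ℝ) * ((⌊x⌋ : ℝ) + (∑ j ∈ Finset.range n, F q E j + ∑' j, F q E (j + n))) := by
          rw [← hsplit, ← hxF]
      _ = _ := by ring
  rw [TQ, hmul, Int.fract_intCast_add]
  exact Int.fract_eq_self.2 ⟨tail_nonneg hq hE1 n, tail_lt_one hq hE1 hinfE n⟩

lemma tail_rec (hq : BasicSeq q) (hE1 : ∀ n, 1 ≤ n → E n < q n) (n : ℕ) :
    tail q E n = ((E (n+1) : ℝ) + tail q E (n+1)) / (q (n+1) : ℝ) := by
  have hshift : ∑' j, F q E (j + n) = F q E n + ∑' j, F q E (j + (n+1)) := by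
    have h0 := Summable.tsum_eq_zero_add (f := fun j => F q E (j + n)) (F_shift_summable hq hE1 n)
    simp only [Nat.zero_add] at h0
    rw [h0]
    congr 1
    apply tsum_congr
    intro j
    congr 1
    omega
  have hq1 : (0:ℝ) < q (n+1) := by have := hq (n+1) (by omega); positivity
  have hcp : (cantorProd q (n+1) : ℝ) = cantorProd q n * q (n+1) := by
    exact_mod_cast congrArg (Nat.cast : ℕ → ℝ) (cp_succ q n)
  have hcpn : (0:ℝ) < cantorProd q n := by exact_mod_cast cp_pos hq n
  rw [tail, hshift, tail, mul_add]
  unfold F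
  rw [hcp]
  field_simp

end S12


namespace S12

lemma ud_transfer (z w : ℕ → ℝ) (hz : ∀ n, 0 ≤ z n ∧ z n < 1) (hw : ∀ n, 0 ≤ w n ∧ w n < 1)
    (hd : Tendsto (fun n => z n - w n) atTop (nhds 0)) (hUD : UDMod1 w) : UDMod1 z := by
  have hfz : ∀ n, Int.fract (z n) = z n := fun n => Int.fract_eq_self.2 ⟨(hz n).1, (hz n).2⟩
  have hfw : ∀ n, Int.fract (w n) = w n := fun n => Int.fract_eq_self.2 ⟨(hw n).1, (hw n).2⟩
  intro a b ha hab hb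
  rw [Metric.tendsto_atTop]
  intro ε hε
  set δ := ε / 5 with hδdef
  have hδ : 0 < δ := by positivity
  obtain ⟨n₀, hn₀⟩ := Metric.tendsto_atTop.1 hd δ hδ
  have hn₀' : ∀ n, n₀ ≤ n → |z n - w n| < δ := by
    intro n hn
    have := hn₀ n hn
    rwa [Real.dist_eq, sub_zero] at this
  -- upper interval
  set a' := max 0 (a - δ) with ha'def
  set b' := min 1 (b + δ) with hb'def
  have ha'0 : 0 ≤ a' := le_max_left _ _
  have ha'a : a' ≤ a := max_le ha (by linarith)
  have hbb' : b ≤ b' := le_min hb (by linarith)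
  have hab' : a' < b' := lt_of_le_of_lt ha'a (lt_of_lt_of_le hab hbb')
  have hb'1 : b' ≤ 1 := min_le_left _ _
  have ha'ge : a - δ ≤ a' := le_max_right _ _
  have hb'le : b' ≤ b + δ := min_le_right _ _
  have hU := hUD a' b' ha'0 hab' hb'1
  have h1 : ∀ᶠ N in atTop,
      |(((Finset.range N).filter (fun n => Int.fract (w n) ∈ Set.Ico a' b')).card : ℝ) / N - (b' - a')| < δ := by
    have := Metric.tendsto_atTop.1 hU δ hδ
    obtain ⟨N₁, hN₁⟩ := this
    filter_upwards [eventually_ge_atTop N₁] with N hN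
    have := hN₁ N hN
    rwa [Real.dist_eq] at this
  have h2 : ∀ᶠ N : ℕ in atTop, ((n₀ : ℝ)) / (N : ℝ) < δ := by
    have := Metric.tendsto_atTop.1 (tendsto_const_div_atTop_nhds_zero_nat (n₀ : ℝ)) δ hδ
    obtain ⟨N₁, hN₁⟩ := this
    filter_upwards [eventually_ge_atTop N₁] with N hN
    have := hN₁ N hN
    rw [Real.dist_eq, sub_zero] at this
    calc ((n₀:ℝ))/(N:ℝ) ≤ |((n₀:ℝ))/(N:ℝ)| := le_abs_self _
      _ < δ := this
  -- lower interval (only used when b - a > 2δ)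
  have h3 : ∀ᶠ N in atTop, (b - a ≤ 2*δ) ∨
      |(((Finset.range N).filter (fun n => Int.fract (w n) ∈ Set.Ico (a+δ) (b-δ))).card : ℝ) / N - ((b-δ) - (a+δ))| < δ := by
    by_cases hcase : b - a ≤ 2*δ
    · exact Filter.Eventually.of_forall (fun N => Or.inl hcase)
    · push_neg at hcase
      have hL := hUD (a+δ) (b-δ) (by linarith) (by linarith) (by linarith)
      obtain ⟨N₁, hN₁⟩ := Metric.tendsto_atTop.1 hL δ hδ
      filter_upwards [eventually_ge_atTop N₁] with N hN
      right
      have := hN₁ N hN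
      rwa [Real.dist_eq] at this
  refine eventually_atTop.1 ?_
  filter_upwards [h1, h2, h3, eventually_gt_atTop 0] with N hh1 hh2 hh3 hNpos
  rw [Real.dist_eq]
  have hNR : (0:ℝ) < N := by exact_mod_cast hNpos
  set Sz := (Finset.range N).filter (fun n => Int.fract (z n) ∈ Set.Ico a b) with hSz
  set Sw1 := (Finset.range N).filter (fun n => Int.fract (w n) ∈ Set.Ico a' b') with hSw1
  -- upper bound : Sz ⊆ range n₀ ∪ Sw1
  have hsub1 : Sz ⊆ Finset.range n₀ ∪ Sw1 := by
    intro n hn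
    rw [hSz, Finset.mem_filter] at hn
    obtain ⟨hnN, hnab⟩ := hn
    rw [hfz, Set.mem_Ico] at hnab
    by_cases hcase : n < n₀
    · exact Finset.mem_union_left _ (Finset.mem_range.2 hcase)
    · push_neg at hcase
      have habs := abs_lt.1 (hn₀' n hcase)
      refine Finset.mem_union_right _ ?_
      rw [hSw1, Finset.mem_filter, hfw, Set.mem_Ico]
      refine ⟨hnN, max_le (hw n).1 (by linarith), lt_min (hw n).2 (by linarith)⟩
  have hcard1 : (Sz.card : ℝ) ≤ n₀ + Sw1.card := by
    have := (Finset.card_le_card hsub1).trans (Finset.card_union_le _ _)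
    rw [Finset.card_range] at this
    exact_mod_cast this
  have hup : (Sz.card : ℝ) / N - (b - a) ≤ 4*δ := by
    have e1 : (Sz.card : ℝ) / N ≤ (n₀:ℝ)/N + (Sw1.card : ℝ)/N := by
      rw [← add_div]
      exact div_le_div_of_nonneg_right hcard1 hNR.le
    have e2 : (Sw1.card : ℝ)/N < (b' - a') + δ := by
      have := abs_lt.1 hh1
      linarith [this.2]
    have e3 : b' - a' ≤ b - a + 2*δ := by linarith
    linarith
  -- lower bound
  have hlow : b - a - 4*δ ≤ (Sz.card : ℝ) / N := by
    rcases hh3 with hsmall | hh3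
    · have : (0:ℝ) ≤ (Sz.card : ℝ) / N := by positivity
      linarith
    · set Sw2 := (Finset.range N).filter (fun n => Int.fract (w n) ∈ Set.Ico (a+δ) (b-δ)) with hSw2
      have hsub2 : Sw2 ⊆ Finset.range n₀ ∪ Sz := by
        intro n hn
        rw [hSw2, Finset.mem_filter] at hn
        obtain ⟨hnN, hnab⟩ := hn
        rw [hfw, Set.mem_Ico] at hnab
        by_cases hcase : n < n₀
        · exact Finset.mem_union_left _ (Finset.mem_range.2 hcase)
        · push_neg at hcase
          have habs := abs_lt.1 (hn₀' n hcase)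
          refine Finset.mem_union_right _ ?_
          rw [hSz, Finset.mem_filter, hfz, Set.mem_Ico]
          exact ⟨hnN, by linarith, by linarith⟩
      have hcard2 : (Sw2.card : ℝ) ≤ n₀ + Sz.card := by
        have := (Finset.card_le_card hsub2).trans (Finset.card_union_le _ _)
        rw [Finset.card_range] at this
        exact_mod_cast this
      have e1 : (Sw2.card : ℝ)/N ≤ (n₀:ℝ)/N + (Sz.card : ℝ)/N := by
        rw [← add_div]
        exact div_le_div_of_nonneg_right hcard2 hNR.le
      have e2 : ((b-δ) - (a+δ)) - δ < (Sw2.card : ℝ)/N := by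
        have := abs_lt.1 hh3
        linarith [this.1]
      linarith
  rw [abs_lt]
  constructor <;> [linarith; linarith]

end S12

theorem stmt_12 (q : ℕ → ℕ) (hq : BasicSeq q) (hinf : InfiniteInLimit q)
    (x : ℝ) (E : ℕ → ℕ) (hE : IsCantorDigits q E x) :
    QDistNormal q x ↔ UDMod1 (fun n => (E (n + 1) : ℝ) / (q (n + 1) : ℝ)) := by
  obtain ⟨hE1, hinfE, hx⟩ := hE
  have hz : ∀ n, 0 ≤ TQ q n x ∧ TQ q n x < 1 :=
    fun n => ⟨Int.fract_nonneg _, Int.fract_lt_one _⟩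
  have hw : ∀ n, 0 ≤ (E (n+1) : ℝ)/(q (n+1) : ℝ) ∧ (E (n+1) : ℝ)/(q (n+1) : ℝ) < 1 := by
    intro n
    have hq1 : (0:ℝ) < q (n+1) := by
      have := hq (n+1) (by omega); positivity
    constructor
    · positivity
    · rw [div_lt_one hq1]
      exact_mod_cast hE1 (n+1) (by omega)
  have heq : ∀ n, TQ q n x - (E (n+1):ℝ)/(q (n+1):ℝ) = S12.tail q E (n+1) / (q (n+1):ℝ) := by
    intro n
    rw [S12.TQ_eq_tail hq hE1 hinfE hx n, S12.tail_rec hq hE1 n, add_div]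
    ring
  have hdiff : Tendsto (fun n => TQ q n x - (E (n+1):ℝ)/(q (n+1):ℝ)) atTop (nhds 0) := by
    have hnn : ∀ n, 0 ≤ TQ q n x - (E (n+1):ℝ)/(q (n+1):ℝ) := by
      intro n
      rw [heq n]
      have h1 := S12.tail_nonneg hq hE1 (n+1)
      have hq1 : (0:ℝ) ≤ q (n+1) := by positivity
      exact div_nonneg h1 hq1
    have hb : ∀ n, TQ q n x - (E (n+1):ℝ)/(q (n+1):ℝ) ≤ 1/(q (n+1):ℝ) := by
      intro n
      rw [heq n]
      have hq1 : (0:ℝ) < q (n+1) := by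
        have := hq (n+1) (by omega); positivity
      exact div_le_div_of_nonneg_right (S12.tail_le_one hq hE1 (n+1)) hq1.le
    have hlim : Tendsto (fun n => 1/(q (n+1):ℝ)) atTop (nhds 0) := by
      have h1 : Tendsto (fun n => ((q (n+1) : ℕ):ℝ)) atTop atTop :=
        tendsto_natCast_atTop_atTop.comp (hinf.comp (tendsto_add_atTop_nat 1))
      simp only [one_div]; exact h1.inv_tendsto_atTop
    exact squeeze_zero hnn hb hlim
  have hdiff' : Tendsto (fun n => (E (n+1):ℝ)/(q (n+1):ℝ) - TQ q n x) atTop (nhds 0) := by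
    have := hdiff.neg
    simp only [neg_sub, neg_zero] at this
    exact this
  constructor
  · exact fun h => S12.ud_transfer _ _ hw hz hdiff' h
  · exact fun h => S12.ud_transfer _ _ hz hw hdiff h
end
end

section
/- Let j ≥ 1, let P = (p_n) be a non-decreasing basic sequence that is j-divergent, and let A ⊆ ℕ be a set of density zero. Then lim_{n→∞} (∑_{i=1}^n χ_A(i)/(p_i p_{i+1} ⋯ p_{i+j−1})) / P_n^{(j)} = 0, where χ_A is the indicator function of A. -/
open Filter Finset MeasureTheory

noncomputable section
open scoped Classical

/-- Auxiliary weight function. -/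
def wfun (p : ℕ → ℕ) (j i : ℕ) : ℝ := 1 / ∏ t ∈ Finset.Ico i (i + j), (p t : ℝ)

/-- Indicator of `A`. -/
def chiA (A : Set ℕ) (i : ℕ) : ℝ := if i ∈ A then 1 else 0

/-- Weighted counting sum. -/
def Tsum (p : ℕ → ℕ) (j : ℕ) (A : Set ℕ) (n : ℕ) : ℝ :=
  ∑ i ∈ Finset.Icc 1 n, chiA A i * wfun p j i

/-- Counting function of `A`. -/
def asum (A : Set ℕ) (n : ℕ) : ℝ := ∑ i ∈ Finset.Icc 1 n, chiA A i

lemma prod_one_le (j : ℕ) (p : ℕ → ℕ) (hp : BasicSeq p) (i : ℕ) (hi : 1 ≤ i) :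
    (1 : ℝ) ≤ ∏ t ∈ Finset.Ico i (i + j), (p t : ℝ) := by
  have hn : (1 : ℕ) ≤ ∏ t ∈ Finset.Ico i (i + j), p t := by
    apply Finset.one_le_prod'
    intro t ht
    have h2 : 2 ≤ p t := hp t (le_trans hi (Finset.mem_Ico.1 ht).1)
    omega
  exact_mod_cast hn

lemma wfun_pos (j : ℕ) (p : ℕ → ℕ) (hp : BasicSeq p) (i : ℕ) (hi : 1 ≤ i) :
    0 < wfun p j i :=
  one_div_pos.2 (lt_of_lt_of_le one_pos (prod_one_le j p hp i hi))

lemma wfun_le_one (j : ℕ) (p : ℕ → ℕ) (hp : BasicSeq p) (i : ℕ) (hi : 1 ≤ i) :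
    wfun p j i ≤ 1 :=
  (div_le_one (lt_of_lt_of_le one_pos (prod_one_le j p hp i hi))).2
    (prod_one_le j p hp i hi)

lemma wfun_anti (j : ℕ) (p : ℕ → ℕ) (hp : BasicSeq p)
    (hmono : ∀ m n, 1 ≤ m → m ≤ n → p m ≤ p n)
    (a b : ℕ) (ha : 1 ≤ a) (hab : a ≤ b) : wfun p j b ≤ wfun p j a := by
  have hle : ∏ t ∈ Finset.Ico a (a + j), (p t : ℝ) ≤ ∏ t ∈ Finset.Ico b (b + j), (p t : ℝ) := by
    rw [Finset.prod_Ico_eq_prod_range, Finset.prod_Ico_eq_prod_range]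
    simp only [Nat.add_sub_cancel_left, Nat.add_sub_cancel]
    apply Finset.prod_le_prod
    · intro k _; positivity
    · intro k _
      have := hmono (a + k) (b + k) (by omega) (by omega)
      exact_mod_cast this
  exact one_div_le_one_div_of_le (lt_of_lt_of_le one_pos (prod_one_le j p hp a ha)) hle

lemma Tsum_succ (p : ℕ → ℕ) (j : ℕ) (A : Set ℕ) (n : ℕ) :
    Tsum p j A (n + 1) = Tsum p j A n + chiA A (n + 1) * wfun p j (n + 1) :=
  Finset.sum_Icc_succ_top (by omega) _

lemma Qnk_succ (p : ℕ → ℕ) (j : ℕ) (n : ℕ) :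
    Qnk p j (n + 1) = Qnk p j n + wfun p j (n + 1) :=
  Finset.sum_Icc_succ_top (by omega) _

lemma asum_succ (A : Set ℕ) (n : ℕ) :
    asum A (n + 1) = asum A n + chiA A (n + 1) :=
  Finset.sum_Icc_succ_top (by omega) _

lemma chiA_nonneg (A : Set ℕ) (i : ℕ) : 0 ≤ chiA A i := by
  unfold chiA; split <;> norm_num

lemma chiA_le_one (A : Set ℕ) (i : ℕ) : chiA A i ≤ 1 := by
  unfold chiA; split <;> norm_num

theorem stmt_13 (j : ℕ) (hj : 1 ≤ j) (p : ℕ → ℕ) (hp : BasicSeq p)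
    (hmono : ∀ m n, 1 ≤ m → m ≤ n → p m ≤ p n)
    (hdiv : KDivergent p j)
    (A : Set ℕ) (hA : DensityZero A) :
    Filter.Tendsto
      (fun n => (∑ i ∈ Finset.Icc 1 n,
          (if i ∈ A then (1 : ℝ) else 0) / ∏ t ∈ Finset.Ico i (i + j), (p t : ℝ)) / Qnk p j n)
      Filter.atTop (nhds 0) := by
  classical
  have hgoal : (fun n => (∑ i ∈ Finset.Icc 1 n,
          (if i ∈ A then (1 : ℝ) else 0) / ∏ t ∈ Finset.Ico i (i + j), (p t : ℝ)) / Qnk p j n)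
      = fun n => Tsum p j A n / Qnk p j n := by
    funext n
    congr 1
    apply Finset.sum_congr rfl
    intro i _
    unfold chiA wfun
    rw [div_eq_mul_one_div]
  rw [hgoal, Metric.tendsto_atTop]
  intro ε hε
  set δ : ℝ := ε / 2 with hδdef
  have hδpos : 0 < δ := by positivity
  -- density zero in terms of asum
  have hA' : Tendsto (fun N => asum A N / N) atTop (nhds 0) := by
    apply hA.congr
    intro N
    congr 1
    rw [Finset.card_filter, Nat.cast_sum]
    unfold asum chiA
    apply Finset.sum_congr rfl
    intro i _
    split <;> simp
  have hev : ∀ᶠ N in atTop, asum A N / N < δ := hA'.eventually_lt_const hδpos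
  obtain ⟨m₀, hm₀⟩ := Filter.eventually_atTop.1 hev
  set m : ℕ := max m₀ 1 with hm
  have hm1 : 1 ≤ m := le_max_right _ _
  have hαle : ∀ i, m ≤ i → asum A i ≤ δ * i := by
    intro i hi
    have h1 : 1 ≤ i := le_trans hm1 hi
    have hipos : (0 : ℝ) < i := by exact_mod_cast h1
    have h2 := hm₀ i (le_trans (le_max_left _ _) hi)
    rw [div_lt_iff₀ hipos] at h2
    linarith
  -- the key Abel-type invariant
  set F : ℕ → ℝ := fun n =>
    Tsum p j A n - δ * Qnk p j n - (asum A n - δ * n) * wfun p j (n + 1) with hFdef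
  have hF : ∀ n, m ≤ n → F n ≤ F m := by
    intro n hn
    induction n, hn using Nat.le_induction with
    | base => exact le_refl _
    | succ n hn ih =>
      have h1 := Tsum_succ p j A n
      have h2 := Qnk_succ p j n
      have h3 := asum_succ A n
      have h4 : wfun p j (n + 1 + 1) ≤ wfun p j (n + 1) :=
        wfun_anti j p hp hmono (n + 1) (n + 1 + 1) (by omega) (by omega)
      have h5 : asum A (n + 1) ≤ δ * ((n : ℝ) + 1) := by
        have := hαle (n + 1) (by omega)
        push_cast at this
        linarith
      have heq : F (n + 1) = F n +
          (wfun p j (n + 1) - wfun p j (n + 1 + 1)) * (asum A (n + 1) - δ * ((n : ℝ) + 1)) := by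
        simp only [hFdef]
        rw [h1, h2, h3]
        push_cast
        ring
      have h6 : (wfun p j (n + 1) - wfun p j (n + 1 + 1)) *
          (asum A (n + 1) - δ * ((n : ℝ) + 1)) ≤ 0 :=
        mul_nonpos_iff.2 (Or.inl ⟨by linarith, by linarith⟩)
      linarith
  -- bounds at m
  have hTm : Tsum p j A m ≤ m := by
    have hterm : ∀ i ∈ Finset.Icc 1 m, chiA A i * wfun p j i ≤ 1 := by
      intro i hi
      have h1 : 1 ≤ i := (Finset.mem_Icc.1 hi).1
      have := chiA_nonneg A i
      have := chiA_le_one A i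
      have := wfun_pos j p hp i h1
      have := wfun_le_one j p hp i h1
      nlinarith
    calc Tsum p j A m ≤ ∑ _i ∈ Finset.Icc 1 m, (1 : ℝ) := Finset.sum_le_sum hterm
      _ = m := by
          rw [Finset.sum_const, Nat.card_Icc]
          simp
  have hSm0 : 0 ≤ Qnk p j m := by
    apply Finset.sum_nonneg
    intro i hi
    exact (wfun_pos j p hp i (Finset.mem_Icc.1 hi).1).le
  have hαm0 : 0 ≤ asum A m :=
    Finset.sum_nonneg fun i _ => chiA_nonneg A i
  have hwm1 : 0 < wfun p j (m + 1) := wfun_pos j p hp (m + 1) (by omega)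
  have hwm2 : wfun p j (m + 1) ≤ 1 := wfun_le_one j p hp (m + 1) (by omega)
  set C : ℝ := (m : ℝ) + δ * m with hCdef
  have hC0 : 0 ≤ C := by
    have : 0 ≤ δ * (m : ℝ) := mul_nonneg hδpos.le (Nat.cast_nonneg m)
    have : (0 : ℝ) ≤ (m : ℝ) := Nat.cast_nonneg m
    simp only [hCdef]
    nlinarith [mul_nonneg hδpos.le (Nat.cast_nonneg m : (0:ℝ) ≤ (m:ℝ))]
  have hbound : ∀ n, m ≤ n → Tsum p j A n ≤ δ * Qnk p j n + C := by
    intro n hn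
    have hFn := hF n hn
    simp only [hFdef] at hFn
    have hα := hαle n hn
    have hw1 : 0 < wfun p j (n + 1) := wfun_pos j p hp (n + 1) (by omega)
    have hp1 : (asum A n - δ * n) * wfun p j (n + 1) ≤ 0 :=
      mul_nonpos_iff.2 (Or.inr ⟨by linarith, hw1.le⟩)
    have h2a : 0 ≤ δ * (m : ℝ) * (1 - wfun p j (m + 1)) :=
      mul_nonneg (mul_nonneg hδpos.le (Nat.cast_nonneg m)) (by linarith)
    have h2b : 0 ≤ asum A m * wfun p j (m + 1) := mul_nonneg hαm0 hwm1.le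
    have h2c : 0 ≤ δ * Qnk p j m := mul_nonneg hδpos.le hSm0
    simp only [hCdef]
    nlinarith
  -- conclusion
  obtain ⟨N₁, hN₁⟩ := Filter.eventually_atTop.1 (hdiv.eventually_ge_atTop (2 * (C + 1) / ε))
  refine ⟨max m N₁, fun n hn => ?_⟩
  have hnm : m ≤ n := le_trans (le_max_left _ _) hn
  have hSge : 2 * (C + 1) / ε ≤ Qnk p j n := hN₁ n (le_trans (le_max_right _ _) hn)
  have hSpos : 0 < Qnk p j n := by
    have h0 : (0 : ℝ) < 2 * (C + 1) / ε := by
      apply div_pos (by linarith) hε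
    linarith
  have hTn : Tsum p j A n ≤ δ * Qnk p j n + C := hbound n hnm
  have hT0 : 0 ≤ Tsum p j A n := by
    apply Finset.sum_nonneg
    intro i hi
    exact mul_nonneg (chiA_nonneg A i) (wfun_pos j p hp i (Finset.mem_Icc.1 hi).1).le
  rw [Real.dist_eq, sub_zero, abs_of_nonneg (div_nonneg hT0 hSpos.le), div_lt_iff₀ hSpos]
  have hkey : C + 1 ≤ ε / 2 * Qnk p j n := by
    have hmul := mul_le_mul_of_nonneg_left hSge (by positivity : (0 : ℝ) ≤ ε / 2)
    have heq2 : ε / 2 * (2 * (C + 1) / ε) = C + 1 := by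
      field_simp
    linarith
  have hδeq : δ = ε / 2 := hδdef
  nlinarith
end
end

section
/- Let (w_n) and (s_n) be sequences of positive real numbers with ∑_{n=1}^∞ w_n = ∑_{n=1}^∞ s_n = ∞, and suppose w_n/s_n is non-increasing. Then for every bounded sequence (a_n) of real numbers: liminf_{n→∞} (∑_{k=1}^n s_k a_k)/(∑_{k=1}^n s_k) ≤ liminf_{n→∞} (∑_{k=1}^n w_k a_k)/(∑_{k=1}^n w_k) ≤ limsup_{n→∞} (∑_{k=1}^n w_k a_k)/(∑_{k=1}^n w_k) ≤ limsup_{n→∞} (∑_{k=1}^n s_k a_k)/(∑_{k=1}^n s_k). -/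
open Filter Finset MeasureTheory

noncomputable section
open scoped Classical

lemma abel_bound (r b : ℕ → ℝ) (N : ℕ) (M : ℝ)
    (hrm : ∀ k, N < k → r (k + 1) ≤ r k)
    (hV : ∀ m, N ≤ m → ∑ k ∈ Finset.Ioc N m, b k ≤ M) :
    ∀ n, N ≤ n → ∑ k ∈ Finset.Ioc N n, r k * b k ≤
      r (n + 1) * (∑ k ∈ Finset.Ioc N n, b k) + (r (N + 1) - r (n + 1)) * M := by
  intro n hn
  induction n, hn using Nat.le_induction with
  | base => simp
  | succ n hn ih =>
    rw [Finset.sum_Ioc_succ_top (by omega), Finset.sum_Ioc_succ_top (by omega)]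
    have h1 : r (n + 1 + 1) ≤ r (n + 1) := hrm (n + 1) (by omega)
    have h2 : (∑ k ∈ Finset.Ioc N n, b k) + b (n + 1) ≤ M := by
      have := hV (n + 1) (by omega)
      rwa [Finset.sum_Ioc_succ_top (by omega)] at this
    nlinarith [mul_le_mul_of_nonneg_left h2 (sub_nonneg.2 h1)]

lemma key_limsup (w s a : ℕ → ℝ)
    (hw : ∀ n, 1 ≤ n → 0 < w n) (hs : ∀ n, 1 ≤ n → 0 < s n)
    (hwdiv : Filter.Tendsto (fun n => ∑ k ∈ Finset.Icc 1 n, w k) Filter.atTop Filter.atTop)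
    (hmono : ∀ m n, 1 ≤ m → m ≤ n → w n / s n ≤ w m / s m)
    {C : ℝ} (hC : ∀ n, |a n| ≤ C) :
    Filter.limsup (fun n => (∑ k ∈ Finset.Icc 1 n, w k * a k) / (∑ k ∈ Finset.Icc 1 n, w k))
        Filter.atTop ≤
      Filter.limsup (fun n => (∑ k ∈ Finset.Icc 1 n, s k * a k) / (∑ k ∈ Finset.Icc 1 n, s k))
        Filter.atTop := by
  have hicc : ∀ (f : ℕ → ℝ) (n : ℕ), ∑ k ∈ Finset.Icc 1 n, f k = ∑ k ∈ Finset.Ioc 0 n, f k := by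
    intro f n; rw [← Finset.Icc_add_one_left_eq_Ioc, zero_add]
  have hC0 : 0 ≤ C := le_trans (abs_nonneg _) (hC 0)
  -- positivity of partial sums
  have hpos : ∀ (u : ℕ → ℝ), (∀ n, 1 ≤ n → 0 < u n) → ∀ n, 1 ≤ n →
      0 < ∑ k ∈ Finset.Icc 1 n, u k := by
    intro u hu n hn
    apply Finset.sum_pos (fun k hk => hu k (Finset.mem_Icc.1 hk).1)
    exact ⟨1, Finset.mem_Icc.2 ⟨le_rfl, hn⟩⟩
  -- means are bounded by C
  have mean_bound : ∀ (u : ℕ → ℝ), (∀ n, 1 ≤ n → 0 < u n) → ∀ n, 1 ≤ n →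
      |(∑ k ∈ Finset.Icc 1 n, u k * a k) / (∑ k ∈ Finset.Icc 1 n, u k)| ≤ C := by
    intro u hu n hn
    rw [abs_div, abs_of_pos (hpos u hu n hn), div_le_iff₀ (hpos u hu n hn)]
    calc |∑ k ∈ Finset.Icc 1 n, u k * a k| ≤ ∑ k ∈ Finset.Icc 1 n, |u k * a k| :=
          Finset.abs_sum_le_sum_abs _ _
      _ ≤ ∑ k ∈ Finset.Icc 1 n, C * u k := by
          apply Finset.sum_le_sum
          intro k hk
          rw [abs_mul, abs_of_pos (hu k (Finset.mem_Icc.1 hk).1)]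
          calc u k * |a k| ≤ u k * C :=
                mul_le_mul_of_nonneg_left (hC k) (le_of_lt (hu k (Finset.mem_Icc.1 hk).1))
            _ = C * u k := mul_comm _ _
      _ = C * ∑ k ∈ Finset.Icc 1 n, u k := (Finset.mul_sum _ _ _).symm
  set σ : ℕ → ℝ := fun n => (∑ k ∈ Finset.Icc 1 n, s k * a k) / (∑ k ∈ Finset.Icc 1 n, s k)
    with hσdef
  set τ : ℕ → ℝ := fun n => (∑ k ∈ Finset.Icc 1 n, w k * a k) / (∑ k ∈ Finset.Icc 1 n, w k)
    with hτdef
  have hσub : ∀ᶠ n in Filter.atTop, σ n ≤ C := by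
    filter_upwards [Filter.eventually_ge_atTop 1] with n hn
    exact le_trans (le_abs_self _) (mean_bound s hs n hn)
  have hτlb : ∀ᶠ n in Filter.atTop, -C ≤ τ n := by
    filter_upwards [Filter.eventually_ge_atTop 1] with n hn
    exact neg_le_of_abs_le (mean_bound w hw n hn)
  have hσbdd : Filter.IsBoundedUnder (· ≤ ·) Filter.atTop σ := ⟨C, eventually_map.2 hσub⟩
  have hτcob : Filter.IsCoboundedUnder (· ≤ ·) Filter.atTop τ :=
    Filter.IsBoundedUnder.isCoboundedUnder_le ⟨-C, eventually_map.2 hτlb⟩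
  set L := Filter.limsup σ Filter.atTop with hL
  apply le_of_forall_pos_le_add
  intro ε hε
  -- eventually σ n < L + ε
  have hev : ∀ᶠ n in Filter.atTop, σ n < L + ε :=
    Filter.eventually_lt_of_limsup_lt (by linarith) hσbdd
  obtain ⟨N0, hN0⟩ := Filter.eventually_atTop.1 hev
  set N := max N0 1 with hNdef
  have hN1 : 1 ≤ N := le_max_right _ _
  have hTS : ∀ m, N ≤ m → ∑ k ∈ Finset.Icc 1 m, s k * a k ≤
      (L + ε) * ∑ k ∈ Finset.Icc 1 m, s k := by
    intro m hm
    have h1 : σ m < L + ε := hN0 m (le_trans (le_max_left _ _) hm)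
    have h2 : 0 < ∑ k ∈ Finset.Icc 1 m, s k := hpos s hs m (le_trans hN1 hm)
    have := (div_lt_iff₀ h2).1 h1
    linarith
  set r : ℕ → ℝ := fun k => w k / s k with hr
  set b : ℕ → ℝ := fun k => s k * a k - (L + ε) * s k with hb
  have hbsum : ∀ m, 1 ≤ m → ∑ k ∈ Finset.Ioc 0 m, b k =
      (∑ k ∈ Finset.Icc 1 m, s k * a k) - (L + ε) * ∑ k ∈ Finset.Icc 1 m, s k := by
    intro m _
    rw [hicc (fun k => s k * a k), hicc s, Finset.mul_sum, ← Finset.sum_sub_distrib]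
  set M : ℝ := max 0 (-(∑ k ∈ Finset.Ioc 0 N, b k)) with hM
  have hM0 : 0 ≤ M := le_max_left _ _
  have hV : ∀ m, N ≤ m → ∑ k ∈ Finset.Ioc N m, b k ≤ M := by
    intro m hm
    have hsplit : (∑ k ∈ Finset.Ioc 0 N, b k) + ∑ k ∈ Finset.Ioc N m, b k =
        ∑ k ∈ Finset.Ioc 0 m, b k :=
      Finset.sum_Ioc_consecutive _ (Nat.zero_le N) hm
    have h1 : ∑ k ∈ Finset.Ioc 0 m, b k ≤ 0 := by
      rw [hbsum m (le_trans hN1 hm)]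
      linarith [hTS m hm]
    have h2 : -(∑ k ∈ Finset.Ioc 0 N, b k) ≤ M := le_max_right _ _
    linarith
  have hrm : ∀ k, N < k → r (k + 1) ≤ r k := by
    intro k hk
    exact hmono k (k + 1) (by omega) (by omega)
  have habel := abel_bound r b N M hrm hV
  have hrb : ∀ k, 1 ≤ k → r k * b k = w k * a k - (L + ε) * w k := by
    intro k hk
    have hsk : s k ≠ 0 := ne_of_gt (hs k hk)
    simp only [hr, hb]
    field_simp
  set D : ℝ := ∑ k ∈ Finset.Ioc 0 N, r k * b k with hD
  set K : ℝ := D + r (N + 1) * M with hK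
  -- main estimate: for n ≥ N, ∑ w a ≤ K + (L+ε) W n
  have hmain : ∀ n, N ≤ n → ∑ k ∈ Finset.Icc 1 n, w k * a k ≤
      K + (L + ε) * ∑ k ∈ Finset.Icc 1 n, w k := by
    intro n hn
    have hsplit : D + ∑ k ∈ Finset.Ioc N n, r k * b k =
        ∑ k ∈ Finset.Ioc 0 n, r k * b k :=
      Finset.sum_Ioc_consecutive _ (Nat.zero_le N) hn
    have htail : ∑ k ∈ Finset.Ioc N n, r k * b k ≤ r (N + 1) * M := by
      have h1 := habel n hn
      have h2 := hV n hn
      have h3 : 0 ≤ r (n + 1) := div_nonneg (le_of_lt (hw (n + 1) (by omega)))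
        (le_of_lt (hs (n + 1) (by omega)))
      nlinarith
    have heq : ∑ k ∈ Finset.Ioc 0 n, r k * b k =
        (∑ k ∈ Finset.Icc 1 n, w k * a k) - (L + ε) * ∑ k ∈ Finset.Icc 1 n, w k := by
      rw [hicc (fun k => w k * a k), hicc w, Finset.mul_sum, ← Finset.sum_sub_distrib]
      apply Finset.sum_congr rfl
      intro k hk
      exact hrb k (Finset.mem_Ioc.1 hk).1
    rw [heq] at hsplit
    linarith
  -- divide by W n
  have hWev : ∀ᶠ n in Filter.atTop, τ n ≤ (L + ε) + K / ∑ k ∈ Finset.Icc 1 n, w k := by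
    filter_upwards [Filter.eventually_ge_atTop N] with n hn
    have hWpos : 0 < ∑ k ∈ Finset.Icc 1 n, w k := hpos w hw n (le_trans hN1 hn)
    rw [hτdef]
    rw [div_le_iff₀ hWpos]
    have hc : K / (∑ k ∈ Finset.Icc 1 n, w k) * (∑ k ∈ Finset.Icc 1 n, w k) = K :=
      div_mul_cancel₀ _ (ne_of_gt hWpos)
    have := hmain n hn
    nlinarith [this, hc]
  have hlim : Filter.Tendsto (fun n => (L + ε) + K / ∑ k ∈ Finset.Icc 1 n, w k)
      Filter.atTop (nhds (L + ε)) := by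
    have h0 : Filter.Tendsto (fun n => K / ∑ k ∈ Finset.Icc 1 n, w k)
        Filter.atTop (nhds 0) := Filter.Tendsto.div_atTop tendsto_const_nhds hwdiv
    simpa using (tendsto_const_nhds.add h0)
  calc Filter.limsup τ Filter.atTop ≤
      Filter.limsup (fun n => (L + ε) + K / ∑ k ∈ Finset.Icc 1 n, w k) Filter.atTop :=
        Filter.limsup_le_limsup hWev hτcob hlim.isBoundedUnder_le
    _ = L + ε := hlim.limsup_eq


lemma neg_limsup_neg (f : ℕ → ℝ) :
    Filter.liminf f Filter.atTop = - Filter.limsup (fun n => - f n) Filter.atTop := by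
  rw [Filter.liminf_eq, Filter.limsup_eq, Real.sInf_def, neg_neg]
  congr 1
  ext a
  simp only [Set.mem_neg, Set.mem_setOf_eq, neg_le_neg_iff, neg_le]

lemma mean_abs_bound (u a : ℕ → ℝ) {C : ℝ} (hu : ∀ n, 1 ≤ n → 0 < u n)
    (hC : ∀ n, |a n| ≤ C) : ∀ n, 1 ≤ n →
    |(∑ k ∈ Finset.Icc 1 n, u k * a k) / (∑ k ∈ Finset.Icc 1 n, u k)| ≤ C := by
  intro n hn
  have hpos : 0 < ∑ k ∈ Finset.Icc 1 n, u k := by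
    apply Finset.sum_pos (fun k hk => hu k (Finset.mem_Icc.1 hk).1)
    exact ⟨1, Finset.mem_Icc.2 ⟨le_rfl, hn⟩⟩
  rw [abs_div, abs_of_pos hpos, div_le_iff₀ hpos]
  calc |∑ k ∈ Finset.Icc 1 n, u k * a k| ≤ ∑ k ∈ Finset.Icc 1 n, |u k * a k| :=
        Finset.abs_sum_le_sum_abs _ _
    _ ≤ ∑ k ∈ Finset.Icc 1 n, C * u k := by
        apply Finset.sum_le_sum
        intro k hk
        rw [abs_mul, abs_of_pos (hu k (Finset.mem_Icc.1 hk).1)]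
        calc u k * |a k| ≤ u k * C :=
              mul_le_mul_of_nonneg_left (hC k) (le_of_lt (hu k (Finset.mem_Icc.1 hk).1))
          _ = C * u k := mul_comm _ _
    _ = C * ∑ k ∈ Finset.Icc 1 n, u k := (Finset.mul_sum _ _ _).symm

/-- Rajagopal's weighted means theorem. -/
theorem stmt_14 (w s a : ℕ → ℝ)
    (hw : ∀ n, 1 ≤ n → 0 < w n) (hs : ∀ n, 1 ≤ n → 0 < s n)
    (hwdiv : Filter.Tendsto (fun n => ∑ k ∈ Finset.Icc 1 n, w k) Filter.atTop Filter.atTop)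
    (hsdiv : Filter.Tendsto (fun n => ∑ k ∈ Finset.Icc 1 n, s k) Filter.atTop Filter.atTop)
    (hmono : ∀ m n, 1 ≤ m → m ≤ n → w n / s n ≤ w m / s m)
    (ha : ∃ C, ∀ n, |a n| ≤ C) :
    Filter.liminf (fun n => (∑ k ∈ Finset.Icc 1 n, s k * a k) / (∑ k ∈ Finset.Icc 1 n, s k))
        Filter.atTop ≤
      Filter.liminf (fun n => (∑ k ∈ Finset.Icc 1 n, w k * a k) / (∑ k ∈ Finset.Icc 1 n, w k))
        Filter.atTop ∧
    Filter.liminf (fun n => (∑ k ∈ Finset.Icc 1 n, w k * a k) / (∑ k ∈ Finset.Icc 1 n, w k))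
        Filter.atTop ≤
      Filter.limsup (fun n => (∑ k ∈ Finset.Icc 1 n, w k * a k) / (∑ k ∈ Finset.Icc 1 n, w k))
        Filter.atTop ∧
    Filter.limsup (fun n => (∑ k ∈ Finset.Icc 1 n, w k * a k) / (∑ k ∈ Finset.Icc 1 n, w k))
        Filter.atTop ≤
      Filter.limsup (fun n => (∑ k ∈ Finset.Icc 1 n, s k * a k) / (∑ k ∈ Finset.Icc 1 n, s k))
        Filter.atTop := by
  obtain ⟨C, hC⟩ := ha
  have hC0 : 0 ≤ C := le_trans (abs_nonneg _) (hC 0)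
  have h3 := key_limsup w s a hw hs hwdiv hmono hC
  have hCneg : ∀ n, |(fun k => -a k) n| ≤ C := fun n => by simpa using hC n
  have h1' := key_limsup w s (fun k => -a k) hw hs hwdiv hmono hCneg
  have ew : (fun n => (∑ k ∈ Finset.Icc 1 n, w k * (fun k => -a k) k) /
      (∑ k ∈ Finset.Icc 1 n, w k)) =
      fun n => -((∑ k ∈ Finset.Icc 1 n, w k * a k) / (∑ k ∈ Finset.Icc 1 n, w k)) := by
    funext n
    simp [mul_neg, Finset.sum_neg_distrib, neg_div]
  have es : (fun n => (∑ k ∈ Finset.Icc 1 n, s k * (fun k => -a k) k) /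
      (∑ k ∈ Finset.Icc 1 n, s k)) =
      fun n => -((∑ k ∈ Finset.Icc 1 n, s k * a k) / (∑ k ∈ Finset.Icc 1 n, s k)) := by
    funext n
    simp [mul_neg, Finset.sum_neg_distrib, neg_div]
  rw [ew, es] at h1'
  have h1 : Filter.liminf
      (fun n => (∑ k ∈ Finset.Icc 1 n, s k * a k) / (∑ k ∈ Finset.Icc 1 n, s k))
      Filter.atTop ≤ Filter.liminf
      (fun n => (∑ k ∈ Finset.Icc 1 n, w k * a k) / (∑ k ∈ Finset.Icc 1 n, w k))
      Filter.atTop := by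
    rw [neg_limsup_neg, neg_limsup_neg]
    exact neg_le_neg h1'
  have hbd := mean_abs_bound w a hw hC
  have hub : Filter.IsBoundedUnder (· ≤ ·) Filter.atTop
      (fun n => (∑ k ∈ Finset.Icc 1 n, w k * a k) / (∑ k ∈ Finset.Icc 1 n, w k)) := by
    refine ⟨C, Filter.eventually_map.2 ?_⟩
    filter_upwards [Filter.eventually_ge_atTop 1] with n hn
    exact le_trans (le_abs_self _) (hbd n hn)
  have hlb : Filter.IsBoundedUnder (· ≥ ·) Filter.atTop
      (fun n => (∑ k ∈ Finset.Icc 1 n, w k * a k) / (∑ k ∈ Finset.Icc 1 n, w k)) := by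
    refine ⟨-C, Filter.eventually_map.2 ?_⟩
    filter_upwards [Filter.eventually_ge_atTop 1] with n hn
    exact neg_le_of_abs_le (hbd n hn)
  exact ⟨h1, Filter.liminf_le_limsup hub hlb, h3⟩
end
end

section
/- Let j ≥ 2 and let Q_1 = (q_{1,n}), Q_2 = (q_{2,n}), …, Q_j = (q_{j,n}) be basic sequences, each infinite in limit. Suppose x = E_0.E_1E_2… w.r.t. Q_1 satisfies E_n < min_{2 ≤ r ≤ j}(q_{r,n} − 1) for infinitely many n. Then for every block B of nonnegative integers there is a constant C such that for all n, |N_n^{Q_j}(B, (ψ_{Q_{j−1},Q_j} ∘ ψ_{Q_{j−2},Q_{j−1}} ∘ ⋯ ∘ ψ_{Q_1,Q_2})(x)) − N_n^{Q_1}(B, x)| ≤ C. -/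
open Filter Finset MeasureTheory

noncomputable section
open scoped Classical

namespace Stmt15

/-- tail sum `r_n = ∑_{m≥0} E(n+m)/(q_n ⋯ q_{n+m})`. -/
def tailSum (q E : ℕ → ℕ) (n : ℕ) : ℝ :=
  ∑' m : ℕ, (E (n + m) : ℝ) / ∏ i ∈ Finset.Ico n (n + m + 1), (q i : ℝ)

variable {q E : ℕ → ℕ}

lemma two_le_q (hq : BasicSeq q) {i : ℕ} (hi : 1 ≤ i) : (2 : ℝ) ≤ (q i : ℝ) := by
  exact_mod_cast hq i hi

lemma Dprod_pos (hq : BasicSeq q) {n : ℕ} (hn : 1 ≤ n) (m : ℕ) :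
    0 < ∏ i ∈ Finset.Ico n (n + m + 1), (q i : ℝ) := by
  apply Finset.prod_pos
  intro i hi
  have := Finset.mem_Ico.mp hi
  have h2 := two_le_q hq (le_trans hn this.1)
  linarith

lemma two_pow_le_Dprod (hq : BasicSeq q) {n : ℕ} (hn : 1 ≤ n) (m : ℕ) :
    (2 : ℝ) ^ m * (q (n + m) : ℝ) ≤ ∏ i ∈ Finset.Ico n (n + m + 1), (q i : ℝ) := by
  rw [Finset.prod_Ico_succ_top (by omega : n ≤ n + m)]
  have h1 : (2 : ℝ) ^ m ≤ ∏ i ∈ Finset.Ico n (n + m), (q i : ℝ) := by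
    have : (2 : ℝ) ^ m = ∏ _i ∈ Finset.Ico n (n + m), (2 : ℝ) := by
      rw [Finset.prod_const, Nat.card_Ico]; congr 1; omega
    rw [this]
    apply Finset.prod_le_prod (fun i _ => by norm_num)
    intro i hi
    exact two_le_q hq (le_trans hn (Finset.mem_Ico.mp hi).1)
  have hqpos : (0 : ℝ) ≤ (q (n + m) : ℝ) := by positivity
  exact mul_le_mul_of_nonneg_right h1 hqpos

lemma term_le_geom (hq : BasicSeq q) {n : ℕ} (hn : 1 ≤ n) (m : ℕ) {a : ℝ}
    (ha : 0 ≤ a) (haq : a ≤ (q (n + m) : ℝ)) :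
    a / ∏ i ∈ Finset.Ico n (n + m + 1), (q i : ℝ) ≤ (1 / 2) ^ m := by
  have hD := Dprod_pos hq hn m
  have hle := two_pow_le_Dprod hq hn m
  have hq2 := two_le_q hq (by omega : 1 ≤ n + m)
  have hqpos : (0 : ℝ) < (q (n + m) : ℝ) := by linarith
  have hpow : (0 : ℝ) < (2 : ℝ) ^ m * (q (n + m) : ℝ) := by positivity
  calc a / ∏ i ∈ Finset.Ico n (n + m + 1), (q i : ℝ)
      ≤ a / ((2 : ℝ) ^ m * (q (n + m) : ℝ)) := by gcongr
    _ ≤ (q (n + m) : ℝ) / ((2 : ℝ) ^ m * (q (n + m) : ℝ)) := by gcongr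
    _ = (1 / 2) ^ m := by
        rw [div_pow, one_pow]
        field_simp


lemma summable_tail (hq : BasicSeq q) (hE : ∀ i, 1 ≤ i → E i < q i) {n : ℕ} (hn : 1 ≤ n) :
    Summable (fun m : ℕ => (E (n + m) : ℝ) / ∏ i ∈ Finset.Ico n (n + m + 1), (q i : ℝ)) := by
  refine Summable.of_nonneg_of_le (fun m => ?_) (fun m => ?_)
    (summable_geometric_of_lt_one (r := 1/2) (by norm_num) (by norm_num))
  · have := Dprod_pos hq hn m
    positivity
  · exact term_le_geom hq hn m (by positivity)
      (by exact_mod_cast (hE (n + m) (by omega)).le)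

lemma summable_g (hq : BasicSeq q) {n : ℕ} (hn : 1 ≤ n) :
    Summable (fun m : ℕ => ((q (n + m) : ℝ) - 1) / ∏ i ∈ Finset.Ico n (n + m + 1), (q i : ℝ)) := by
  refine Summable.of_nonneg_of_le (fun m => ?_) (fun m => ?_)
    (summable_geometric_of_lt_one (r := 1/2) (by norm_num) (by norm_num))
  · have h1 := two_le_q hq (by omega : 1 ≤ n + m)
    have h2 := Dprod_pos hq hn m
    have h3 : (0:ℝ) ≤ (q (n + m) : ℝ) - 1 := by linarith
    positivity
  · have h1 := two_le_q hq (by omega : 1 ≤ n + m)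
    exact term_le_geom hq hn m (by linarith) (by linarith)

lemma telescope (hq : BasicSeq q) {n : ℕ} (hn : 1 ≤ n) (K : ℕ) :
    ∑ m ∈ Finset.range K, ((q (n + m) : ℝ) - 1) / ∏ i ∈ Finset.Ico n (n + m + 1), (q i : ℝ)
      = 1 - 1 / ∏ i ∈ Finset.Ico n (n + K), (q i : ℝ) := by
  induction K with
  | zero => simp
  | succ K ih =>
      rw [Finset.sum_range_succ, ih]
      have hA : (0 : ℝ) < ∏ i ∈ Finset.Ico n (n + K), (q i : ℝ) := by
        apply Finset.prod_pos; intro i hi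
        have := Finset.mem_Ico.mp hi
        have := two_le_q hq (le_trans hn this.1); linarith
      have hqK : (0 : ℝ) < (q (n + K) : ℝ) := by
        have := two_le_q hq (by omega : 1 ≤ n + K); linarith
      have hsplit : ∏ i ∈ Finset.Ico n (n + K + 1), (q i : ℝ)
          = (∏ i ∈ Finset.Ico n (n + K), (q i : ℝ)) * (q (n + K) : ℝ) :=
        Finset.prod_Ico_succ_top (by omega) _
      have hsplit2 : ∏ i ∈ Finset.Ico n (n + (K + 1)), (q i : ℝ)
          = (∏ i ∈ Finset.Ico n (n + K), (q i : ℝ)) * (q (n + K) : ℝ) := by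
        rw [show n + (K + 1) = n + K + 1 by omega]; exact hsplit
      rw [hsplit, hsplit2]
      field_simp
      ring

lemma hasSum_g (hq : BasicSeq q) {n : ℕ} (hn : 1 ≤ n) :
    HasSum (fun m : ℕ => ((q (n + m) : ℝ) - 1) / ∏ i ∈ Finset.Ico n (n + m + 1), (q i : ℝ)) 1 := by
  have hs := summable_g hq hn
  have h1 := hs.hasSum
  have h2 := h1.tendsto_sum_nat
  have h3 : Filter.Tendsto
      (fun K => ∑ m ∈ Finset.range K,
        ((q (n + m) : ℝ) - 1) / ∏ i ∈ Finset.Ico n (n + m + 1), (q i : ℝ))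
      Filter.atTop (nhds 1) := by
    have heq : ∀ K, ∑ m ∈ Finset.range K,
        ((q (n + m) : ℝ) - 1) / ∏ i ∈ Finset.Ico n (n + m + 1), (q i : ℝ)
        = 1 - 1 / ∏ i ∈ Finset.Ico n (n + K), (q i : ℝ) := telescope hq hn
    simp only [heq]
    have : Filter.Tendsto (fun K : ℕ => 1 / ∏ i ∈ Finset.Ico n (n + K), (q i : ℝ))
        Filter.atTop (nhds 0) := by
      have hApos : ∀ K : ℕ, (0:ℝ) < ∏ i ∈ Finset.Ico n (n + K), (q i : ℝ) := by
        intro K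
        apply Finset.prod_pos; intro i hi
        have := two_le_q hq (le_trans hn (Finset.mem_Ico.mp hi).1); linarith
      refine squeeze_zero (f := fun K : ℕ => 1 / ∏ i ∈ Finset.Ico n (n + K), (q i : ℝ))
        (g := fun K => (1/2 : ℝ) ^ K)
        (fun K => by have := hApos K; positivity) (fun K => ?_) ?_
      · have h2pow : (2 : ℝ) ^ K ≤ ∏ i ∈ Finset.Ico n (n + K), (q i : ℝ) := by
          have : (2 : ℝ) ^ K = ∏ _i ∈ Finset.Ico n (n + K), (2 : ℝ) := by
            rw [Finset.prod_const, Nat.card_Ico]; congr 1; omega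
          rw [this]
          apply Finset.prod_le_prod (fun i _ => by norm_num)
          intro i hi
          exact two_le_q hq (le_trans hn (Finset.mem_Ico.mp hi).1)
        have hp : (0:ℝ) < (2:ℝ) ^ K := by positivity
        calc (1:ℝ) / ∏ i ∈ Finset.Ico n (n + K), (q i : ℝ)
            ≤ 1 / (2:ℝ) ^ K := one_div_le_one_div_of_le hp h2pow
          _ = (1/2 : ℝ) ^ K := by rw [div_pow, one_pow]
      · exact tendsto_pow_atTop_nhds_zero_of_lt_one (by norm_num) (by norm_num)
    have := Filter.Tendsto.const_sub (1 : ℝ) this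
    simpa using this
  have := tendsto_nhds_unique h2 h3
  rwa [this] at h1

lemma tailSum_nonneg {n : ℕ} : 0 ≤ tailSum q E n :=
  tsum_nonneg (fun m => by positivity)

lemma tailSum_lt_one (hq : BasicSeq q) (hE : ∀ i, 1 ≤ i → E i < q i)
    (hinf : {i | 1 ≤ i ∧ E i ≠ q i - 1}.Infinite) {n : ℕ} (hn : 1 ≤ n) :
    tailSum q E n < 1 := by
  obtain ⟨m₀, hm₀, hgt⟩ := hinf.exists_gt n
  set M := m₀ - n with hM
  have hnm : n + M = m₀ := by omega
  have hlt : (E (n + M) : ℝ) < (q (n + M) : ℝ) - 1 := by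
    rw [hnm]
    have h1 : E m₀ < q m₀ := hE m₀ hm₀.1
    have h2 : E m₀ ≠ q m₀ - 1 := hm₀.2
    have h3 : 2 ≤ q m₀ := hq m₀ hm₀.1
    have : E m₀ + 1 < q m₀ := by omega
    have := (Nat.cast_lt (α := ℝ)).mpr this
    push_cast at this
    linarith
  have key : tailSum q E n <
      ∑' m : ℕ, ((q (n + m) : ℝ) - 1) / ∏ i ∈ Finset.Ico n (n + m + 1), (q i : ℝ) := by
    apply Summable.tsum_lt_tsum (i := M) ?_ ?_ (summable_tail hq hE hn) (summable_g hq hn)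
    · intro m
      have h1 : (E (n + m) : ℝ) ≤ (q (n + m) : ℝ) - 1 := by
        have := hE (n + m) (by omega)
        have := (Nat.cast_le (α := ℝ)).mpr (Nat.lt_iff_add_one_le.mp this)
        push_cast at this; linarith
      have hD := Dprod_pos hq hn m
      exact (div_le_div_iff_of_pos_right hD).mpr h1
    · have hD := Dprod_pos hq hn M
      exact (div_lt_div_iff_of_pos_right hD).mpr hlt
  rwa [(hasSum_g hq hn).tsum_eq] at key

lemma tailSum_rec (hq : BasicSeq q) (hE : ∀ i, 1 ≤ i → E i < q i) {n : ℕ} (hn : 1 ≤ n) :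
    (q n : ℝ) * tailSum q E n = (E n : ℝ) + tailSum q E (n + 1) := by
  have hs := summable_tail hq hE hn
  have h0 : tailSum q E n = (E n : ℝ) / (q n : ℝ)
      + ∑' m : ℕ, (E (n + (m + 1)) : ℝ) / ∏ i ∈ Finset.Ico n (n + (m + 1) + 1), (q i : ℝ) := by
    rw [tailSum, Summable.tsum_eq_zero_add hs]
    congr 1
    simp [Finset.prod_Ico_succ_top (le_refl n)]
  have hterm : ∀ m : ℕ, (E (n + (m + 1)) : ℝ) / ∏ i ∈ Finset.Ico n (n + (m + 1) + 1), (q i : ℝ)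
      = ((E (n + 1 + m) : ℝ) / ∏ i ∈ Finset.Ico (n + 1) (n + 1 + m + 1), (q i : ℝ)) / (q n : ℝ) := by
    intro m
    have hix : n + (m + 1) = n + 1 + m := by omega
    simp only [hix]
    rw [Finset.prod_eq_prod_Ico_succ_bot (by omega : n < n + 1 + m + 1) (fun i => (q i : ℝ)),
      div_div, mul_comm]
  have h1 : ∑' m : ℕ, (E (n + (m + 1)) : ℝ) / ∏ i ∈ Finset.Ico n (n + (m + 1) + 1), (q i : ℝ)
      = tailSum q E (n + 1) / (q n : ℝ) := by
    rw [tsum_congr hterm, tsum_div_const]; rfl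
  have hqne : (q n : ℝ) ≠ 0 := by
    have := two_le_q hq hn; linarith
  rw [h0, h1]
  field_simp

lemma tsum_eq_tailSum_one :
    (∑' m : ℕ, (E (m + 1) : ℝ) / (cantorProd q (m + 1) : ℝ)) = tailSum q E 1 := by
  unfold tailSum
  apply tsum_congr
  intro m
  rw [show 1 + m = m + 1 from by omega]
  congr 1
  rw [cantorProd, Finset.Ico_add_one_right_eq_Icc]
  push_cast
  rfl

lemma TQ_eq_tailSum (hq : BasicSeq q) {x : ℝ} (hx : IsCantorDigits q E x) (n : ℕ) :
    TQ q n x = tailSum q E (n + 1) := by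
  obtain ⟨hEq, hinf, hxeq⟩ := hx
  have hself : ∀ k : ℕ, 1 ≤ k → Int.fract (tailSum q E k) = tailSum q E k := fun k hk =>
    Int.fract_eq_self.mpr ⟨tailSum_nonneg, tailSum_lt_one hq hEq hinf hk⟩
  induction n with
  | zero =>
      rw [TQ, show cantorProd q 0 = 1 from by simp [cantorProd]]
      push_cast
      rw [one_mul, hxeq, tsum_eq_tailSum_one, Int.fract_intCast_add, hself 1 le_rfl]
  | succ n ih =>
      have hrec := tailSum_rec hq hEq (show 1 ≤ n + 1 by omega)
      have hP : (cantorProd q (n + 1) : ℝ) = (cantorProd q n : ℝ) * (q (n + 1) : ℝ) := by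
        rw [cantorProd, cantorProd, Finset.prod_Icc_succ_top (by omega : 1 ≤ n + 1)]
        push_cast
        ring
      have hsplit : (cantorProd q n : ℝ) * x
          = (⌊(cantorProd q n : ℝ) * x⌋ : ℝ) + tailSum q E (n + 1) := by
        have := Int.floor_add_fract ((cantorProd q n : ℝ) * x)
        rw [show Int.fract ((cantorProd q n : ℝ) * x) = tailSum q E (n + 1) from ih] at this
        linarith
      have heq : (cantorProd q (n + 1) : ℝ) * x
          = (((q (n + 1) : ℤ) * ⌊(cantorProd q n : ℝ) * x⌋ + (E (n + 1) : ℤ) : ℤ) : ℝ)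
            + tailSum q E (n + 1 + 1) := by
        push_cast
        linear_combination x * hP + (q (n + 1) : ℝ) * hsplit + hrec
      rw [TQ, heq, Int.fract_intCast_add, hself (n + 1 + 1) (by omega)]

lemma cantorDigit_eq (hq : BasicSeq q) {x : ℝ} (hx : IsCantorDigits q E x)
    {n : ℕ} (hn : 1 ≤ n) : cantorDigit q x n = (E n : ℤ) := by
  have hEq := hx.1
  have hinf := hx.2.1
  have hT : TQ q (n - 1) x = tailSum q E n := by
    rw [TQ_eq_tailSum hq hx, show n - 1 + 1 = n from by omega]
  rw [cantorDigit, hT, tailSum_rec hq hEq hn,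
    show ((E n : ℝ) + tailSum q E (n + 1)) = ((E n : ℤ) : ℝ) + tailSum q E (n + 1) from by
      push_cast; ring,
    Int.floor_intCast_add]
  have h0 : ⌊tailSum q E (n + 1)⌋ = 0 := by
    rw [Int.floor_eq_zero_iff]
    exact ⟨tailSum_nonneg, tailSum_lt_one hq hEq hinf (by omega)⟩
  rw [h0, add_zero]

lemma psi_digits {p q' : ℕ → ℕ} (hp : BasicSeq p) (hq' : BasicSeq q') {y : ℝ} {F : ℕ → ℕ}
    (hF : IsCantorDigits p F y)
    (hGinf : {n | 1 ≤ n ∧ min (F n) (q' n - 1) ≠ q' n - 1}.Infinite) :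
    IsCantorDigits q' (fun n => min (F n) (q' n - 1)) (psiMap p q' y) := by
  set G : ℕ → ℕ := fun n => min (F n) (q' n - 1) with hG
  have hGlt : ∀ n, 1 ≤ n → G n < q' n := by
    intro n hn
    have h2 := hq' n hn
    have : G n ≤ q' n - 1 := min_le_right _ _
    omega
  have hpsi : psiMap p q' y = ∑' n : ℕ, (G (n + 1) : ℝ) / (cantorProd q' (n + 1) : ℝ) := by
    rw [psiMap]
    apply tsum_congr
    intro n
    congr 1
    have hd : cantorDigit p y (n + 1) = (F (n + 1) : ℤ) := cantorDigit_eq hp hF (by omega)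
    rw [hd]
    have h1 : ((q' (n + 1) : ℤ) - 1) = ((q' (n + 1) - 1 : ℕ) : ℤ) := by
      have := hq' (n + 1) (by omega)
      omega
    rw [h1, ← Nat.cast_min]
    norm_cast
  have hb0 : 0 ≤ psiMap p q' y := by
    rw [hpsi, tsum_eq_tailSum_one]
    exact tailSum_nonneg
  have hb1 : psiMap p q' y < 1 := by
    rw [hpsi, tsum_eq_tailSum_one]
    exact tailSum_lt_one hq' hGlt hGinf le_rfl
  have hfl : (⌊psiMap p q' y⌋ : ℝ) = 0 := by
    rw [Int.floor_eq_zero_iff.mpr ⟨hb0, hb1⟩]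
    norm_num
  exact ⟨hGlt, hGinf, by rw [hfl, zero_add]; exact hpsi⟩

lemma le_foldr_max (B : List ℕ) {a : ℕ} (ha : a ∈ B) : a ≤ B.foldr max 0 := by
  induction B with
  | nil => cases ha
  | cons b L ih =>
      rcases List.mem_cons.mp ha with h | h
      · simp only [List.foldr_cons, h]
        exact le_max_left _ _
      · exact le_trans (ih h) (le_max_right _ _)

lemma getD_le_foldr_max (B : List ℕ) {t : ℕ} (ht : t < B.length) :
    B.getD t 0 ≤ B.foldr max 0 := by
  rw [List.getD_eq_getElem B 0 ht]
  exact le_foldr_max B (List.getElem_mem ht)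

lemma card_filter_le (m N : ℕ) (P R : ℕ → Prop) [DecidablePred P] [DecidablePred R]
    (h : ∀ i, N ≤ i → P i → R i) :
    ((Finset.Icc 1 m).filter P).card ≤ ((Finset.Icc 1 m).filter R).card + N := by
  have hsub : (Finset.Icc 1 m).filter P ⊆ ((Finset.Icc 1 m).filter R) ∪ Finset.range N := by
    intro i hi
    rw [Finset.mem_filter] at hi
    by_cases hN : N ≤ i
    · exact Finset.mem_union_left _ (Finset.mem_filter.mpr ⟨hi.1, h i hN hi.2⟩)
    · exact Finset.mem_union_right _ (Finset.mem_range.mpr (by omega))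
  calc ((Finset.Icc 1 m).filter P).card ≤ _ := Finset.card_le_card hsub
    _ ≤ _ := (Finset.card_union_le _ _).trans (by simp)

end Stmt15

open Stmt15 in
/-- block-counting theorem for iterated `ψ` maps. Here `Q 1, …, Q j` are the
basic sequences and the iterated composition
`ψ_{Q_{j-1},Q_j} ∘ ⋯ ∘ ψ_{Q_1,Q_2}` applied to `x` is expressed by primitive recursion. -/
theorem stmt_15 (j : ℕ) (hj : 2 ≤ j) (Q : ℕ → ℕ → ℕ)
    (hQ : ∀ r, 1 ≤ r → r ≤ j → BasicSeq (Q r))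
    (hQinf : ∀ r, 1 ≤ r → r ≤ j → InfiniteInLimit (Q r))
    (x : ℝ) (E : ℕ → ℕ) (hE : IsCantorDigits (Q 1) E x)
    (hsmall : {n | 1 ≤ n ∧ ∀ r, 2 ≤ r → r ≤ j → E n < Q r n - 1}.Infinite) :
    ∀ B : List ℕ, ∃ C : ℝ, ∀ n : ℕ,
      |(blockCountReal (Q j)
          (Nat.rec (motive := fun _ => ℝ) x
            (fun r yr => psiMap (Q (r + 1)) (Q (r + 2)) yr) (j - 1)) B n : ℝ) -
        (blockCount E B n : ℝ)| ≤ C := by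
  classical
  set Y : ℕ → ℝ := fun r => Nat.rec (motive := fun _ => ℝ) x
    (fun r yr => psiMap (Q (r + 1)) (Q (r + 2)) yr) r with hY
  set F : ℕ → ℕ → ℕ := fun r => Nat.rec (motive := fun _ => ℕ → ℕ) E
    (fun r Fr => fun n => min (Fr n) (Q (r + 2) n - 1)) r with hF
  have hYsucc : ∀ r, Y (r + 1) = psiMap (Q (r + 1)) (Q (r + 2)) (Y r) := fun r => rfl
  have hFsucc : ∀ r n, F (r + 1) n = min (F r n) (Q (r + 2) n - 1) := fun r n => rfl
  -- F r agrees with E on the "small" set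
  have hFE : ∀ r, r + 1 ≤ j → ∀ n ∈ {n | 1 ≤ n ∧ ∀ s, 2 ≤ s → s ≤ j → E n < Q s n - 1},
      F r n = E n := by
    intro r
    induction r with
    | zero => intro _ n _; rfl
    | succ r ih =>
        intro hr n hn
        rw [hFsucc, ih (by omega) n hn]
        exact min_eq_left (le_of_lt (hn.2 (r + 2) (by omega) (by omega)))
  -- F r ≤ E
  have hFle : ∀ r n, F r n ≤ E n := by
    intro r
    induction r with
    | zero => intro n; exact le_rfl
    | succ r ih => intro n; rw [hFsucc]; exact le_trans (min_le_left _ _) (ih n)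
  -- where F r differs from E it equals some q_{s,n} - 1
  have hFne : ∀ r n, F r n ≠ E n → ∃ s, 2 ≤ s ∧ s ≤ r + 1 ∧ F r n = Q s n - 1 := by
    intro r
    induction r with
    | zero => intro n h; exact absurd rfl h
    | succ r ih =>
        intro n h
        rcases le_total (Q (r + 2) n - 1) (F r n) with hle | hle
        · exact ⟨r + 2, by omega, by omega, by rw [hFsucc]; exact min_eq_right hle⟩
        · have heq : F (r + 1) n = F r n := by rw [hFsucc]; exact min_eq_left hle
          rw [heq] at h
          obtain ⟨s, h2, h3, h4⟩ := ih n h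
          exact ⟨s, h2, by omega, by rw [heq]; exact h4⟩
  -- invariant: F r are the digits of Y r w.r.t. Q (r+1)
  have hinv : ∀ r, r + 1 ≤ j → IsCantorDigits (Q (r + 1)) (F r) (Y r) := by
    intro r
    induction r with
    | zero => intro _; exact hE
    | succ r ih =>
        intro hr
        rw [hYsucc]
        have hGinf : {n | 1 ≤ n ∧ min (F r n) (Q (r + 2) n - 1) ≠ Q (r + 2) n - 1}.Infinite := by
          apply hsmall.mono
          intro n hn
          refine ⟨hn.1, ?_⟩
          have h1 : min (F r n) (Q (r + 2) n - 1) = E n := by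
            rw [← hFsucc]
            exact hFE (r + 1) hr n hn
          rw [h1]
          exact Nat.ne_of_lt (hn.2 (r + 2) (by omega) (by omega))
        exact psi_digits (hQ (r + 1) (by omega) (by omega)) (hQ (r + 2) (by omega) (by omega))
          (ih (by omega)) hGinf
  -- digits of the final point
  have hj1 : j - 1 + 1 = j := by omega
  have hfinal : IsCantorDigits (Q j) (F (j - 1)) (Y (j - 1)) := by
    have := hinv (j - 1) (by omega)
    rwa [hj1] at this
  have hdig : ∀ n, 1 ≤ n → cantorDigit (Q j) (Y (j - 1)) n = (F (j - 1) n : ℤ) :=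
    fun n hn => cantorDigit_eq (hQ j (by omega) le_rfl) hfinal hn
  intro B
  set M := B.foldr max 0 with hM
  -- choose N beyond which all q_{s,n} are large
  have key : ∀ s : ℕ, ∃ Ns : ℕ, ∀ n, Ns ≤ n → 2 ≤ s → s ≤ j → M + 2 ≤ Q s n := by
    intro s
    by_cases hs : 2 ≤ s ∧ s ≤ j
    · obtain ⟨Ns, hNs⟩ := Filter.eventually_atTop.mp
        ((Filter.tendsto_atTop.mp (hQinf s (by omega) hs.2)) (M + 2))
      exact ⟨Ns, fun n hn _ _ => hNs n hn⟩
    · exact ⟨0, fun n _ h2 hj' => absurd ⟨h2, hj'⟩ hs⟩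
  choose Ns hNs using key
  set N := (Finset.Icc 2 j).sup Ns with hN
  have hbig : ∀ s n, 2 ≤ s → s ≤ j → N ≤ n → M + 2 ≤ Q s n := by
    intro s n h2 hj' hn
    exact hNs s n (le_trans (Finset.le_sup (Finset.mem_Icc.mpr ⟨h2, hj'⟩)) hn) h2 hj'
  -- digit blocks coincide for i ≥ N
  have hPR : ∀ i, N ≤ i →
      ((∀ t, t < B.length → F (j - 1) (i + t) = B.getD t 0) ↔
        (∀ t, t < B.length → E (i + t) = B.getD t 0)) := by
    intro i hi
    have hbound : ∀ t, t < B.length → F (j - 1) (i + t) ≠ E (i + t) →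
        M + 1 ≤ F (j - 1) (i + t) := by
      intro t ht hne
      obtain ⟨s, h2, h3, h4⟩ := hFne (j - 1) (i + t) hne
      have hs_le : s ≤ j := by omega
      have := hbig s (i + t) h2 hs_le (by omega)
      omega
    constructor
    · intro h t ht
      by_cases hne : F (j - 1) (i + t) = E (i + t)
      · rw [← hne]; exact h t ht
      · have h1 := hbound t ht hne
        have h2 := h t ht
        have h3 := getD_le_foldr_max B ht
        omega
    · intro h t ht
      by_cases hne : F (j - 1) (i + t) = E (i + t)
      · rw [hne]; exact h t ht
      · have h1 := hbound t ht hne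
        have h2 := hFle (j - 1) (i + t)
        have h3 := h t ht
        have h4 := getD_le_foldr_max B ht
        omega
  -- rewrite blockCountReal through the digits
  have hBR : ∀ n, blockCountReal (Q j) (Y (j - 1)) B n =
      ((Finset.Icc 1 (n + 1 - B.length)).filter
        (fun i => ∀ t, t < B.length → F (j - 1) (i + t) = B.getD t 0)).card := by
    intro n
    rw [blockCountReal]
    congr 1
    apply Finset.filter_congr
    intro i hi
    have hi1 : 1 ≤ i := (Finset.mem_Icc.mp hi).1
    constructor
    · intro h t ht
      have := h t ht
      rw [hdig (i + t) (by omega)] at this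
      exact_mod_cast this
    · intro h t ht
      rw [hdig (i + t) (by omega), h t ht]
  refine ⟨N, fun n => ?_⟩
  have hc1 : blockCountReal (Q j) (Y (j - 1)) B n ≤ blockCount E B n + N := by
    rw [hBR, blockCount]
    exact card_filter_le _ N _ _ (fun i hNi hP => (hPR i hNi).mp hP)
  have hc2 : blockCount E B n ≤ blockCountReal (Q j) (Y (j - 1)) B n + N := by
    rw [hBR, blockCount]
    exact card_filter_le _ N _ _ (fun i hNi hP => (hPR i hNi).mpr hP)
  have h1 : (blockCountReal (Q j) (Y (j - 1)) B n : ℝ) ≤ blockCount E B n + N := by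
    exact_mod_cast hc1
  have h2 : (blockCount E B n : ℝ) ≤ blockCountReal (Q j) (Y (j - 1)) B n + N := by
    exact_mod_cast hc2
  rw [abs_sub_le_iff]
  constructor <;> linarith
end
end
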